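/- arXiv:1911.12403 — 11 statements merged into one kernel-verified Lean document; each statement's English description precedes it below -/
import Mathlib

section
/- For every integer t ≥ 2 such that t + 1 is prime, and every positive integer ℓ, there exists an ℓt × t Vatican design. -/
/-- A uniform `n × t` crossover design: each row is a bijection `Fin t → Fin t`,
`t` divides `n`, and each treatment appears exactly `n / t` times in each column. -/
def IsUniformDesign (n t : ℕ) (D : Fin n → Fin t → Fin t) : Prop :=
  t ∣ n ∧ (∀ i : Fin n, Function.Bijective (D i)) ∧
  ∀ (j x : Fin t), Nat.card {i : Fin n // D i j = x} = n / t

/-- `o_d(x, y)`: the number of pairs `(i, j)` with `j + d < t`, `D i j = x` and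
`D i (j + d) = y`. -/
noncomputable def designPairCount (n t : ℕ) (D : Fin n → Fin t → Fin t) (d : ℕ) (x y : Fin t) : ℕ :=
  Nat.card {p : Fin n × Fin t //
    ∃ h : (p.2 : ℕ) + d < t, D p.1 p.2 = x ∧ D p.1 ⟨(p.2 : ℕ) + d, h⟩ = y}

/-- A Roman-`k` design: a uniform design with `o_d(x, y) ≤ n / t` for all
`1 ≤ d ≤ k` and all distinct treatments `x ≠ y`. -/
def IsRomanDesign (n t k : ℕ) (D : Fin n → Fin t → Fin t) : Prop :=
  IsUniformDesign n t D ∧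
  ∀ d : ℕ, 1 ≤ d → d ≤ k → ∀ x y : Fin t, x ≠ y → designPairCount n t D d x y ≤ n / t

/-- A Vatican design is a Roman-`(t - 1)` design. -/
def IsVaticanDesign (n t : ℕ) (D : Fin n → Fin t → Fin t) : Prop :=
  IsRomanDesign n t (t - 1) D

namespace VaticanAux

/-- The design entry: row `i`, column `j` gets `(i % t + 1)(j + 1) - 1` computed in `ZMod (t+1)`. -/
def Ddef (t i : ℕ) (j : Fin t) : Fin t :=
  ⟨((((i % t + 1) * ((j : ℕ) + 1) : ℕ) : ZMod (t + 1)).val - 1) % t,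
    Nat.mod_lt _ (Nat.lt_of_le_of_lt (Nat.zero_le _) j.2)⟩

variable {t : ℕ}

lemma cast_ne_zero {a : ℕ} (h1 : 0 < a) (h2 : a < t + 1) : ((a : ℕ) : ZMod (t + 1)) ≠ 0 := by
  intro h
  rw [ZMod.natCast_eq_zero_iff] at h
  exact absurd (Nat.le_of_dvd h1 h) (by omega)

/-- Encoding `a ↦ a+1` into `ZMod (t+1)` is injective on `[0, t)`. -/
lemma enc_inj {a b : ℕ} (ha : a < t) (hb : b < t)
    (h : ((a + 1 : ℕ) : ZMod (t + 1)) = ((b + 1 : ℕ) : ZMod (t + 1))) : a = b := by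
  have := congrArg ZMod.val h
  rw [ZMod.val_cast_of_lt (by omega), ZMod.val_cast_of_lt (by omega)] at this
  omega

lemma key (hp : Nat.Prime (t + 1)) (i : ℕ) (j : Fin t) :
    (((Ddef t i j : ℕ) + 1 : ℕ) : ZMod (t + 1)) =
      ((i % t + 1 : ℕ) : ZMod (t + 1)) * (((j : ℕ) + 1 : ℕ) : ZMod (t + 1)) := by
  haveI : Fact (Nat.Prime (t + 1)) := ⟨hp⟩
  have ht0 : 0 < t := by
    have := hp.two_le; omega
  set a : ZMod (t + 1) := (((i % t + 1) * ((j : ℕ) + 1) : ℕ) : ZMod (t + 1)) with ha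
  have haprod : a = ((i % t + 1 : ℕ) : ZMod (t + 1)) * (((j : ℕ) + 1 : ℕ) : ZMod (t + 1)) := by
    rw [ha]; push_cast; ring
  have hane : a ≠ 0 := by
    rw [haprod]
    exact mul_ne_zero (cast_ne_zero (by omega) (by have := Nat.mod_lt i ht0; omega))
      (cast_ne_zero (by omega) (by have := j.2; omega))
  have hval0 : a.val ≠ 0 := fun h => hane ((ZMod.val_eq_zero a).mp h)
  have hvlt : a.val < t + 1 := ZMod.val_lt a
  have hD : (Ddef t i j : ℕ) = a.val - 1 := by
    show ((a.val - 1) % t) = a.val - 1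
    exact Nat.mod_eq_of_lt (by omega)
  rw [hD, ← haprod]
  have : a.val - 1 + 1 = a.val := by omega
  rw [this]
  simp [ZMod.natCast_val, ZMod.cast_id]

lemma Ddef_eq_iff (hp : Nat.Prime (t + 1)) (i : ℕ) (j x : Fin t) :
    Ddef t i j = x ↔
      ((i % t + 1 : ℕ) : ZMod (t + 1)) * (((j : ℕ) + 1 : ℕ) : ZMod (t + 1)) =
        (((x : ℕ) + 1 : ℕ) : ZMod (t + 1)) := by
  constructor
  · rintro rfl; exact (key hp i j).symm
  · intro h
    have := (key hp i j).trans h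
    exact Fin.ext (enc_inj (Ddef t i j).2 x.2 this)

lemma card_row (ℓ r0 : ℕ) (hr : r0 < t) :
    Nat.card {i : Fin (ℓ * t) // (i : ℕ) % t = r0} = ℓ := by
  have ht0 : 0 < t := Nat.lt_of_le_of_lt (Nat.zero_le _) hr
  have e : {i : Fin (ℓ * t) // (i : ℕ) % t = r0} ≃ Fin ℓ :=
    { toFun := fun i => ⟨(i.1 : ℕ) / t, Nat.div_lt_of_lt_mul (Nat.lt_of_lt_of_eq i.1.2 (mul_comm ℓ t))⟩
      invFun := fun k => ⟨⟨k.1 * t + r0, by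
          calc k.1 * t + r0 < (k.1 + 1) * t := by rw [add_mul]; omega
          _ ≤ ℓ * t := Nat.mul_le_mul_right t k.2⟩,
        by show ((k : ℕ) * t + r0) % t = r0
           rw [add_comm, Nat.add_mul_mod_self_right, Nat.mod_eq_of_lt hr]⟩
      left_inv := fun i => by
        obtain ⟨⟨iv, hlt⟩, hm⟩ := i
        apply Subtype.ext; apply Fin.ext
        show iv / t * t + r0 = iv
        subst hm
        rw [mul_comm]
        exact Nat.div_add_mod iv t
      right_inv := fun k => by
        apply Fin.ext
        show ((k : ℕ) * t + r0) / t = (k : ℕ)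
        rw [mul_comm, Nat.mul_add_div ht0, Nat.div_eq_of_lt hr]
        exact Nat.add_zero _ }
  rw [Nat.card_congr e, Nat.card_eq_fintype_card, Fintype.card_fin]

end VaticanAux

open VaticanAux in
theorem vatican_design_of_prime_succ (t : ℕ) (ht : 2 ≤ t) (hp : Nat.Prime (t + 1))
    (ℓ : ℕ) (hℓ : 0 < ℓ) :
    ∃ D : Fin (ℓ * t) → Fin t → Fin t, IsVaticanDesign (ℓ * t) t D := by
  haveI : Fact (Nat.Prime (t + 1)) := ⟨hp⟩
  have ht0 : 0 < t := by omega
  refine ⟨fun i j => Ddef t (i : ℕ) j, ⟨dvd_mul_left t ℓ, ?_, ?_⟩, ?_⟩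
  · -- each row is a bijection
    intro i
    rw [← Finite.injective_iff_bijective]
    intro j1 j2 h
    simp only [] at h
    have h1 := key hp (i : ℕ) j1
    have h2 := key hp (i : ℕ) j2
    rw [h] at h1
    have h3 := h1.symm.trans h2
    have hne : (((i : ℕ) % t + 1 : ℕ) : ZMod (t + 1)) ≠ 0 :=
      cast_ne_zero (by omega) (by have := Nat.mod_lt (i : ℕ) ht0; omega)
    exact Fin.ext (enc_inj j1.2 j2.2 (mul_left_cancel₀ hne h3))
  · -- column counts
    intro j x
    have hjne : (((j : ℕ) + 1 : ℕ) : ZMod (t + 1)) ≠ 0 :=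
      cast_ne_zero (by omega) (by have := j.2; omega)
    set c : ZMod (t + 1) :=
      (((x : ℕ) + 1 : ℕ) : ZMod (t + 1)) * ((((j : ℕ) + 1 : ℕ) : ZMod (t + 1)))⁻¹ with hc
    have hcne : c ≠ 0 :=
      mul_ne_zero (cast_ne_zero (by omega) (by have := x.2; omega)) (inv_ne_zero hjne)
    have hcval : c.val ≠ 0 := fun h => hcne ((ZMod.val_eq_zero c).mp h)
    have hcvlt : c.val < t + 1 := ZMod.val_lt c
    have hiff : ∀ i : Fin (ℓ * t), Ddef t (i : ℕ) j = x ↔ (i : ℕ) % t = c.val - 1 := by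
      intro i
      rw [Ddef_eq_iff hp]
      constructor
      · intro h
        have hA : (((i : ℕ) % t + 1 : ℕ) : ZMod (t + 1)) = c := by
          rw [hc, ← h]
          exact (mul_inv_cancel_right₀ hjne _).symm
        have hv := congrArg ZMod.val hA
        rw [ZMod.val_cast_of_lt (by have := Nat.mod_lt (i : ℕ) ht0; omega)] at hv
        omega
      · intro h
        have hA : (((i : ℕ) % t + 1 : ℕ) : ZMod (t + 1)) = c := by
          rw [h]
          have hcc : c.val - 1 + 1 = c.val := by omega
          rw [hcc]
          simp [ZMod.natCast_val, ZMod.cast_id]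
        rw [hA, hc]
        exact inv_mul_cancel_right₀ hjne _
    rw [Nat.card_congr (Equiv.subtypeEquivRight hiff), card_row ℓ (c.val - 1) (by omega),
      Nat.mul_div_cancel _ ht0]
  · -- the Roman-(t-1) pair-count condition
    intro d hd1 hd2 x y hxy
    unfold designPairCount
    have hdne : ((d : ℕ) : ZMod (t + 1)) ≠ 0 := cast_ne_zero (by omega) (by omega)
    have hYX : (((y : ℕ) + 1 : ℕ) : ZMod (t + 1)) - (((x : ℕ) + 1 : ℕ) : ZMod (t + 1)) ≠ 0 := by
      intro h
      exact hxy (Fin.ext (enc_inj y.2 x.2 (sub_eq_zero.mp h)).symm)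
    set w : ZMod (t + 1) :=
      ((((y : ℕ) + 1 : ℕ) : ZMod (t + 1)) - (((x : ℕ) + 1 : ℕ) : ZMod (t + 1))) *
        (((d : ℕ) : ZMod (t + 1)))⁻¹ with hw
    have hwne : w ≠ 0 := mul_ne_zero hYX (inv_ne_zero hdne)
    have hwval : w.val ≠ 0 := fun h => hwne ((ZMod.val_eq_zero w).mp h)
    have hwvlt : w.val < t + 1 := ZMod.val_lt w
    have hmem : ∀ (i : Fin (ℓ * t)) (j : Fin t) (h : (j : ℕ) + d < t),
        Ddef t (i : ℕ) j = x → Ddef t (i : ℕ) ⟨(j : ℕ) + d, h⟩ = y →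
        (((i : ℕ) % t + 1 : ℕ) : ZMod (t + 1)) = w := by
      intro i j h hx hy
      have h1 := (Ddef_eq_iff hp (i : ℕ) j x).mp hx
      have h2 := (Ddef_eq_iff hp (i : ℕ) ⟨(j : ℕ) + d, h⟩ y).mp hy
      simp only [Fin.val_mk] at h2
      set A : ZMod (t + 1) := (((i : ℕ) % t + 1 : ℕ) : ZMod (t + 1)) with hA
      have hAd : A * ((d : ℕ) : ZMod (t + 1)) =
          (((y : ℕ) + 1 : ℕ) : ZMod (t + 1)) - (((x : ℕ) + 1 : ℕ) : ZMod (t + 1)) := by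
        have hcast : (((j : ℕ) + d + 1 : ℕ) : ZMod (t + 1)) -
            (((j : ℕ) + 1 : ℕ) : ZMod (t + 1)) = ((d : ℕ) : ZMod (t + 1)) := by
          push_cast; ring
        calc A * ((d : ℕ) : ZMod (t + 1))
            = A * ((((j : ℕ) + d + 1 : ℕ) : ZMod (t + 1)) -
                (((j : ℕ) + 1 : ℕ) : ZMod (t + 1))) := by rw [hcast]
          _ = _ := by rw [mul_sub, h1, h2]
      rw [hw, eq_mul_inv_iff_mul_eq₀ hdne]
      exact hAd
    have hmod : ∀ (i : Fin (ℓ * t)) (j : Fin t) (h : (j : ℕ) + d < t),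
        Ddef t (i : ℕ) j = x → Ddef t (i : ℕ) ⟨(j : ℕ) + d, h⟩ = y →
        (i : ℕ) % t = w.val - 1 := by
      intro i j h hx hy
      have hv := congrArg ZMod.val (hmem i j h hx hy)
      rw [ZMod.val_cast_of_lt (by have := Nat.mod_lt (i : ℕ) ht0; omega)] at hv
      omega
    have hf : ∃ f : {p : Fin (ℓ * t) × Fin t //
        ∃ h : (p.2 : ℕ) + d < t, Ddef t (p.1 : ℕ) p.2 = x ∧
          Ddef t (p.1 : ℕ) ⟨(p.2 : ℕ) + d, h⟩ = y} → Fin ℓ, Function.Injective f := by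
      refine ⟨fun p => ⟨(p.1.1 : ℕ) / t,
        Nat.div_lt_of_lt_mul (Nat.lt_of_lt_of_eq p.1.1.2 (mul_comm ℓ t))⟩, ?_⟩
      rintro ⟨⟨ip, jp⟩, hp', hxp, hyp⟩ ⟨⟨iq, jq⟩, hq', hxq, hyq⟩ heq
      have hdiv : (ip : ℕ) / t = (iq : ℕ) / t := congrArg Fin.val heq
      have hmp := hmod ip jp hp' hxp hyp
      have hmq := hmod iq jq hq' hxq hyq
      have hieq : (ip : ℕ) = (iq : ℕ) := by
        calc (ip : ℕ) = t * ((ip : ℕ) / t) + (ip : ℕ) % t := (Nat.div_add_mod _ t).symm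
          _ = t * ((iq : ℕ) / t) + (iq : ℕ) % t := by rw [hdiv, hmp, hmq]
          _ = (iq : ℕ) := Nat.div_add_mod _ t
      have hAp := hmem ip jp hp' hxp hyp
      have hAq := hmem iq jq hq' hxq hyq
      have h1p := (Ddef_eq_iff hp (ip : ℕ) jp x).mp hxp
      have h1q := (Ddef_eq_iff hp (iq : ℕ) jq x).mp hxq
      rw [hAp] at h1p
      rw [hAq] at h1q
      have hjeq : jp = jq :=
        Fin.ext (enc_inj jp.2 jq.2 (mul_left_cancel₀ hwne (h1p.trans h1q.symm)))
      exact Subtype.ext (Prod.ext (Fin.ext hieq) hjeq)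
    obtain ⟨f, hfinj⟩ := hf
    calc Nat.card _ ≤ Nat.card (Fin ℓ) := Nat.card_le_card_of_injective f hfinj
      _ = ℓ := by simp
      _ = ℓ * t / t := (Nat.mul_div_cancel _ ht0).symm
end

section
/- For t ∈ {3, 15} and every even positive integer ℓ, there exists an ℓt × t Vatican design. -/
/-! ### Auxiliary construction -/

/-- A row of the base block: `j ↦ εσ(j) + r`. -/
def vRow {t : ℕ} [NeZero t] (σ : Fin t → Fin t) (q : Bool × Fin t) (j : Fin t) : Fin t :=
  cond q.1 (σ j) (-σ j) + q.2

def vPred (t : ℕ) [NeZero t] (σ : Fin t → Fin t) (d : ℕ) (δ : Fin t)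
    (q : Bool × Fin t) : Prop :=
  ∃ h : (q.2 : ℕ) + d < t,
    (cond q.1 (σ ⟨(q.2 : ℕ) + d, h⟩ - σ q.2) (σ q.2 - σ ⟨(q.2 : ℕ) + d, h⟩)) = δ

instance vPredDec (t : ℕ) [NeZero t] (σ : Fin t → Fin t) (d : ℕ) (δ : Fin t) :
    DecidablePred (vPred t σ d δ) := fun _ => exists_prop_decidable _

lemma vRow_bij {t : ℕ} [NeZero t] {σ : Fin t → Fin t} (hσ : Function.Injective σ)
    (q : Bool × Fin t) : Function.Bijective (vRow σ q) := by
  rw [← Finite.injective_iff_bijective]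
  obtain ⟨ε, r⟩ := q
  intro j1 j2 h
  cases ε <;> simp only [vRow, cond] at h
  · exact hσ (neg_injective (add_right_cancel h))
  · exact hσ (add_right_cancel h)

lemma vCol {t : ℕ} [NeZero t] (σ : Fin t → Fin t) (j x : Fin t) :
    Nat.card {q : Bool × Fin t // vRow σ q j = x} = 2 := by
  have e : {q : Bool × Fin t // vRow σ q j = x} ≃ Bool :=
    { toFun := fun s => s.1.1
      invFun := fun ε => ⟨(ε, x - cond ε (σ j) (-σ j)), by
        simp only [vRow]; abel⟩
      left_inv := fun s => by
        obtain ⟨⟨ε, r⟩, hs⟩ := s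
        apply Subtype.ext
        simp only [vRow] at hs
        have hr : r = x - cond ε (σ j) (-σ j) := eq_sub_of_add_eq' hs
        show (ε, x - cond ε (σ j) (-σ j)) = (ε, r)
        rw [hr]
      right_inv := fun ε => rfl }
  rw [Nat.card_congr e, Nat.card_eq_fintype_card, Fintype.card_bool]

lemma vPair_le {t : ℕ} [NeZero t] (σ : Fin t → Fin t)
    (hC2 : ∀ d ∈ Finset.Icc 1 (t - 1), ∀ δ : Fin t, δ ≠ 0 →
      (Finset.univ.filter (vPred t σ d δ)).card ≤ 2)
    (d : ℕ) (hd1 : 1 ≤ d) (hd2 : d ≤ t - 1) (x y : Fin t) (hxy : x ≠ y) :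
    Nat.card {p : (Bool × Fin t) × Fin t //
      ∃ h : (p.2 : ℕ) + d < t, vRow σ p.1 p.2 = x ∧ vRow σ p.1 ⟨(p.2 : ℕ) + d, h⟩ = y} ≤ 2 := by
  set S := {p : (Bool × Fin t) × Fin t //
      ∃ h : (p.2 : ℕ) + d < t, vRow σ p.1 p.2 = x ∧ vRow σ p.1 ⟨(p.2 : ℕ) + d, h⟩ = y}
  have key : ∀ s : S, vPred t σ d (y - x) (s.1.1.1, s.1.2) := by
    rintro ⟨⟨⟨ε, r⟩, j⟩, h, hx', hy'⟩
    refine ⟨h, ?_⟩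
    cases ε <;> simp only [vRow, cond] at hx' hy' ⊢ <;>
      · rw [← hx', ← hy']; abel
  have finj : Function.Injective
      (fun s : S => (⟨(s.1.1.1, s.1.2), key s⟩ : {q : Bool × Fin t // vPred t σ d (y - x) q})) := by
    rintro ⟨⟨⟨ε, r⟩, j⟩, hs⟩ ⟨⟨⟨ε', r'⟩, j'⟩, hs'⟩ hff
    simp only [Subtype.mk.injEq, Prod.mk.injEq] at hff
    obtain ⟨rfl, rfl⟩ := hff
    obtain ⟨h, hx', _⟩ := hs
    obtain ⟨h', hx'', _⟩ := hs'
    simp only [vRow] at hx' hx''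
    have hr : r = r' := add_left_cancel (hx'.trans hx''.symm)
    apply Subtype.ext
    show ((ε, r), j) = ((ε, r'), j)
    rw [hr]
  calc Nat.card S ≤ Nat.card {q : Bool × Fin t // vPred t σ d (y - x) q} :=
        Nat.card_le_card_of_injective _ finj
    _ = (Finset.univ.filter (vPred t σ d (y - x))).card := by
        rw [Nat.card_eq_fintype_card]; exact Fintype.card_subtype _
    _ ≤ 2 := hC2 d (Finset.mem_Icc.mpr ⟨hd1, hd2⟩) (y - x)
        (sub_ne_zero.mpr (Ne.symm hxy))

/-- `{p : α × ρ // P p.2} ≃ α × {b // P b}` -/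
def prodSubEquiv (α ρ : Type*) (P : ρ → Prop) : {p : α × ρ // P p.2} ≃ α × {b // P b} where
  toFun p := (p.1.1, ⟨p.1.2, p.2⟩)
  invFun q := ⟨(q.1, q.2.1), q.2.2⟩
  left_inv _ := rfl
  right_inv _ := rfl

def prodSubEquiv2 (α ρ γ : Type*) (Q : ρ → γ → Prop) :
    {p : (α × ρ) × γ // Q p.1.2 p.2} ≃ α × {q : ρ × γ // Q q.1 q.2} where
  toFun p := (p.1.1.1, ⟨(p.1.1.2, p.1.2), p.2⟩)
  invFun q := ⟨((q.1, q.2.1.1), q.2.1.2), q.2.2⟩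
  left_inv _ := rfl
  right_inv _ := rfl

lemma rep_count₁ (n m : ℕ) (ρ : Type*) [Finite ρ] (e : Fin n ≃ Fin m × ρ) (P : ρ → Prop) :
    Nat.card {i : Fin n // P (e i).2} = m * Nat.card {b : ρ // P b} := by
  rw [Nat.card_congr (e.subtypeEquiv (fun i => Iff.rfl) :
    {i : Fin n // P (e i).2} ≃ {p : Fin m × ρ // P p.2}),
    Nat.card_congr (prodSubEquiv (Fin m) ρ P), Nat.card_prod, Nat.card_eq_fintype_card,
    Fintype.card_fin]

lemma rep_count₂ (n m : ℕ) (ρ γ : Type*) [Finite ρ] [Finite γ]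
    (e : Fin n ≃ Fin m × ρ) (Q : ρ → γ → Prop) :
    Nat.card {p : Fin n × γ // Q (e p.1).2 p.2} = m * Nat.card {q : ρ × γ // Q q.1 q.2} := by
  rw [Nat.card_congr ((Equiv.prodCongr e (Equiv.refl γ)).subtypeEquiv (fun p => Iff.rfl) :
    {p : Fin n × γ // Q (e p.1).2 p.2} ≃ {p : (Fin m × ρ) × γ // Q p.1.2 p.2}),
    Nat.card_congr (prodSubEquiv2 (Fin m) ρ γ Q), Nat.card_prod, Nat.card_eq_fintype_card,
    Fintype.card_fin]

lemma vMaster (t : ℕ) [NeZero t] (σ : Fin t → Fin t) (hσ : Function.Injective σ)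
    (hC2 : ∀ d ∈ Finset.Icc 1 (t - 1), ∀ δ : Fin t, δ ≠ 0 →
      (Finset.univ.filter (vPred t σ d δ)).card ≤ 2)
    (m : ℕ) (hm0 : 0 < m) :
    ∃ D : Fin ((m + m) * t) → Fin t → Fin t, IsVaticanDesign ((m + m) * t) t D := by
  have ht : 0 < t := Nat.pos_of_ne_zero (NeZero.ne t)
  have e : Fin ((m + m) * t) ≃ Fin m × (Bool × Fin t) :=
    Fintype.equivOfCardEq (by simp [Fintype.card_fin]; ring)
  refine ⟨fun i j => vRow σ (e i).2 j, ⟨⟨⟨m + m, (mul_comm _ _)⟩, ?_, ?_⟩, ?_⟩⟩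
  · intro i
    exact vRow_bij hσ (e i).2
  · intro j x
    rw [Nat.mul_div_cancel _ ht]
    have h1 := rep_count₁ ((m + m) * t) m (Bool × Fin t) e (fun b => vRow σ b j = x)
    rw [h1, vCol σ j x]
    omega
  · intro d hd1 hd2 x y hxy
    rw [Nat.mul_div_cancel _ ht]
    have h2 := rep_count₂ ((m + m) * t) m (Bool × Fin t) (Fin t) e
      (fun b j => ∃ h : (j : ℕ) + d < t, vRow σ b j = x ∧ vRow σ b ⟨(j : ℕ) + d, h⟩ = y)
    have h3 : designPairCount ((m + m) * t) t (fun i j => vRow σ (e i).2 j) d x y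
        = m * Nat.card {q : (Bool × Fin t) × Fin t //
            ∃ h : (q.2 : ℕ) + d < t, vRow σ q.1 q.2 = x ∧ vRow σ q.1 ⟨(q.2 : ℕ) + d, h⟩ = y} := h2
    rw [h3]
    have h4 := vPair_le σ hC2 d hd1 hd2 x y hxy
    calc m * Nat.card {q : (Bool × Fin t) × Fin t //
            ∃ h : (q.2 : ℕ) + d < t, vRow σ q.1 q.2 = x ∧ vRow σ q.1 ⟨(q.2 : ℕ) + d, h⟩ = y}
        ≤ m * 2 := Nat.mul_le_mul_left m h4
      _ ≤ m + m := by omega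

theorem vatican_design_three_fifteen (t : ℕ) (ht : t = 3 ∨ t = 15)
    (ℓ : ℕ) (hℓ : 0 < ℓ) (hev : Even ℓ) :
    ∃ D : Fin (ℓ * t) → Fin t → Fin t, IsVaticanDesign (ℓ * t) t D := by
  obtain ⟨m, rfl⟩ := hev
  have hm0 : 0 < m := by omega
  rcases ht with rfl | rfl
  · exact vMaster 3 ![0, 1, 2] (by decide) (by decide) m hm0
  · exact vMaster 15 ![0, 1, 4, 10, 8, 2, 7, 12, 9, 13, 11, 3, 14, 6, 5]
      (by decide) (by decide) m hm0
end

section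
/- Let t, k be positive integers and ℓ₁, …, ℓ_m positive integers such that for each i ∈ {1, …, m} there exists an ℓ_i t × t Roman-k design. Then for any non-negative integers c₁, …, c_m with n = (c₁ℓ₁ + ⋯ + c_mℓ_m)t > 0, there exists an n × t Roman-k design. -/
lemma card_fin_split {n₁ n₂ : ℕ} (P : Fin (n₁ + n₂) → Prop) :
    Nat.card {i // P i} =
      Nat.card {i : Fin n₁ // P (Fin.castAdd n₂ i)} +
      Nat.card {i : Fin n₂ // P (Fin.natAdd n₁ i)} := by
  classical
  rw [← Nat.card_sum]
  refine Nat.card_congr ?_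
  refine (Equiv.subtypeEquiv finSumFinEquiv (fun _ => Iff.rfl)).symm.trans
    (Equiv.subtypeSum.trans (Equiv.sumCongr (Equiv.subtypeEquivRight fun a => ?_)
      (Equiv.subtypeEquivRight fun b => ?_))) <;> simp

lemma card_pair_split {n₁ n₂ : ℕ} {α : Type*} [Finite α] (P : Fin (n₁ + n₂) × α → Prop) :
    Nat.card {p // P p} =
      Nat.card {p : Fin n₁ × α // P (Fin.castAdd n₂ p.1, p.2)} +
      Nat.card {p : Fin n₂ × α // P (Fin.natAdd n₁ p.1, p.2)} := by
  classical
  rw [← Nat.card_sum]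
  refine Nat.card_congr ?_
  refine (Equiv.subtypeEquiv ((Equiv.sumProdDistrib _ _ _).symm.trans
      (Equiv.prodCongr finSumFinEquiv (Equiv.refl α))) (fun _ => Iff.rfl)).symm.trans
    (Equiv.subtypeSum.trans (Equiv.sumCongr (Equiv.subtypeEquivRight fun a => ?_)
      (Equiv.subtypeEquivRight fun b => ?_))) <;>
    simp [Prod.map]

lemma roman_zero (t k : ℕ) :
    ∃ D : Fin 0 → Fin t → Fin t, IsRomanDesign 0 t k D := by
  refine ⟨Fin.elim0, ⟨⟨⟨0, rfl⟩, fun i => i.elim0, fun j x => ?_⟩, fun d _ _ x y _ => ?_⟩⟩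
  · simp
  · rw [designPairCount, Nat.card_of_isEmpty]
    exact Nat.zero_le _

lemma roman_add {t k n₁ n₂ : ℕ} (ht : 0 < t)
    (h₁ : ∃ D : Fin n₁ → Fin t → Fin t, IsRomanDesign n₁ t k D)
    (h₂ : ∃ D : Fin n₂ → Fin t → Fin t, IsRomanDesign n₂ t k D) :
    ∃ D : Fin (n₁ + n₂) → Fin t → Fin t, IsRomanDesign (n₁ + n₂) t k D := by
  obtain ⟨D₁, ⟨⟨hd₁, hb₁, hc₁⟩, hp₁⟩⟩ := h₁
  obtain ⟨D₂, ⟨⟨hd₂, hb₂, hc₂⟩, hp₂⟩⟩ := h₂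
  refine ⟨fun i => Fin.addCases (motive := fun _ => Fin t → Fin t) D₁ D₂ i, ?_⟩
  have hdiv : (n₁ + n₂) / t = n₁ / t + n₂ / t := by
    obtain ⟨a, rfl⟩ := hd₁
    obtain ⟨b, rfl⟩ := hd₂
    rw [← Nat.mul_add, Nat.mul_div_cancel_left _ ht, Nat.mul_div_cancel_left _ ht,
      Nat.mul_div_cancel_left _ ht]
  refine ⟨⟨dvd_add hd₁ hd₂, fun i => ?_, fun j x => ?_⟩, fun d hd1 hdk x y hxy => ?_⟩
  · refine i.addCases (fun i => ?_) (fun i => ?_)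
    · simpa using hb₁ i
    · simpa using hb₂ i
  · rw [card_fin_split, hdiv]
    simp only [Fin.addCases_left, Fin.addCases_right, hc₁, hc₂]
  · unfold designPairCount
    rw [card_pair_split, hdiv]
    simp only [Fin.addCases_left, Fin.addCases_right]
    exact Nat.add_le_add (hp₁ d hd1 hdk x y hxy) (hp₂ d hd1 hdk x y hxy)

theorem roman_design_stack (t k m : ℕ) (ht : 0 < t) (hk : 0 < k)
    (ℓ : Fin m → ℕ) (hℓ : ∀ i, 0 < ℓ i)
    (hdes : ∀ i, ∃ D : Fin (ℓ i * t) → Fin t → Fin t, IsRomanDesign (ℓ i * t) t k D)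
    (c : Fin m → ℕ) (n : ℕ) (hn : n = (∑ i, c i * ℓ i) * t) (hpos : 0 < n) :
    ∃ D : Fin n → Fin t → Fin t, IsRomanDesign n t k D := by
  have hn' : n = ∑ i, c i * (ℓ i * t) := by
    rw [hn, Finset.sum_mul]
    simp [mul_assoc]
  subst hn'
  have smul : ∀ (cc N : ℕ), (∃ D : Fin N → Fin t → Fin t, IsRomanDesign N t k D) →
      ∃ D : Fin (cc * N) → Fin t → Fin t, IsRomanDesign (cc * N) t k D := by
    intro cc N hN
    induction cc with
    | zero =>
      have h0 : 0 * N = 0 := Nat.zero_mul N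
      rw [h0]; exact roman_zero t k
    | succ dd ihc =>
      have h : (dd + 1) * N = dd * N + N := by ring
      rw [h]
      exact roman_add ht ihc hN
  have key : ∀ s : Finset (Fin m),
      ∃ D : Fin (∑ i ∈ s, c i * (ℓ i * t)) → Fin t → Fin t,
        IsRomanDesign (∑ i ∈ s, c i * (ℓ i * t)) t k D := by
    intro s
    induction s using Finset.induction with
    | empty => simp only [Finset.sum_empty]; exact roman_zero t k
    | @insert i s hnotmem ih =>
      rw [Finset.sum_insert hnotmem]
      exact roman_add ht (smul (c i) _ (hdes i)) ih
  exact key Finset.univ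
end

section
/- For every positive integer ℓ, there exists a 21ℓ × 21 Roman-2 design. -/
/-! ### Construction: the nonabelian group of order 21 acting on a special sequence -/

/-- Multiplication of the nonabelian group of order 21 (Z7 ⋊ Z3), encoded on `Fin 21`
via `i ↔ (i % 7, i / 7)`. -/
def gmul (i j : Fin 21) : Fin 21 :=
  ⟨(i.1 % 7 + 2 ^ (i.1 / 7) * (j.1 % 7)) % 7 + 7 * ((i.1 / 7 + j.1 / 7) % 3), by omega⟩

/-- Inversion in the group. -/
def ginv (i : Fin 21) : Fin 21 :=
  ⟨(7 - (2 ^ ((3 - i.1 / 7) % 3) * (i.1 % 7)) % 7) % 7 + 7 * ((3 - i.1 / 7) % 3), by omega⟩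

/-- A special ordering of all 21 group elements: successive left quotients at
distance 1 and distance 2 are all distinct. -/
def seqA : Fin 21 → Fin 21 :=
  ![13, 6, 5, 0, 9, 8, 2, 19, 1, 17, 3, 16, 18, 10, 20, 4, 12, 7, 15, 14, 11]

/-- The base 21 × 21 design. -/
def baseB (r j : Fin 21) : Fin 21 := gmul r (seqA j)

set_option maxHeartbeats 4000000 in
lemma baseB_bijective : ∀ r : Fin 21, Function.Bijective (baseB r) := by decide

set_option maxHeartbeats 4000000 in
lemma gmul_cancel : ∀ r r' z : Fin 21, gmul r z = gmul r' z → r = r' := by decide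

set_option maxHeartbeats 4000000 in
lemma gmul_ginv_solve : ∀ x z : Fin 21, gmul (gmul x (ginv z)) z = x := by decide

set_option maxHeartbeats 4000000 in
lemma gmul_ginv_self : ∀ r z : Fin 21, gmul (gmul r z) (ginv z) = r := by decide

set_option maxHeartbeats 4000000 in
lemma quot_inj_1 : ∀ (j j' : Fin 21), ∀ h : (j : ℕ) + 1 < 21, ∀ h' : (j' : ℕ) + 1 < 21,
    ∀ x : Fin 21,
    gmul (gmul x (ginv (seqA j))) (seqA ⟨(j : ℕ) + 1, h⟩) =
      gmul (gmul x (ginv (seqA j'))) (seqA ⟨(j' : ℕ) + 1, h'⟩) → j = j' := by decide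

set_option maxHeartbeats 4000000 in
lemma quot_inj_2 : ∀ (j j' : Fin 21), ∀ h : (j : ℕ) + 2 < 21, ∀ h' : (j' : ℕ) + 2 < 21,
    ∀ x : Fin 21,
    gmul (gmul x (ginv (seqA j))) (seqA ⟨(j : ℕ) + 2, h⟩) =
      gmul (gmul x (ginv (seqA j'))) (seqA ⟨(j' : ℕ) + 2, h'⟩) → j = j' := by decide

/-- Key uniqueness: two occurrences of an ordered pair at distance `d ∈ {1,2}` coincide. -/
lemma key_unique {d : ℕ} (hd : d = 1 ∨ d = 2) (r r' j j' : Fin 21)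
    (h : (j : ℕ) + d < 21) (h' : (j' : ℕ) + d < 21)
    (e1 : baseB r j = baseB r' j')
    (e2 : baseB r ⟨(j : ℕ) + d, h⟩ = baseB r' ⟨(j' : ℕ) + d, h'⟩) :
    r = r' ∧ j = j' := by
  have hr : r = gmul (baseB r j) (ginv (seqA j)) := (gmul_ginv_self r (seqA j)).symm
  have hr' : r' = gmul (baseB r j) (ginv (seqA j')) := by
    rw [e1]; exact (gmul_ginv_self r' (seqA j')).symm
  have e2' : gmul (gmul (baseB r j) (ginv (seqA j))) (seqA ⟨(j : ℕ) + d, h⟩) =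
      gmul (gmul (baseB r j) (ginv (seqA j'))) (seqA ⟨(j' : ℕ) + d, h'⟩) := by
    rw [← hr, ← hr']; exact e2
  have hjj : j = j' := by
    rcases hd with rfl | rfl
    · exact quot_inj_1 j j' h h' _ e2'
    · exact quot_inj_2 j j' h h' _ e2'
  subst hjj
  exact ⟨gmul_cancel r r' (seqA j) e1, rfl⟩

/-- Reduce a row index of the stacked design to the base design. -/
def liftIdx (ℓ : ℕ) (i : Fin (ℓ * 21)) : Fin 21 := ⟨i.1 % 21, Nat.mod_lt _ (by norm_num)⟩

lemma card_mod_eq (ℓ : ℕ) (P : Fin 21 → Prop) [DecidablePred P] :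
    Nat.card {i : Fin (ℓ * 21) // P (liftIdx ℓ i)} = ℓ * Nat.card {r : Fin 21 // P r} := by
  have e : {i : Fin (ℓ * 21) // P (liftIdx ℓ i)} ≃ Fin ℓ × {r : Fin 21 // P r} :=
    { toFun := fun i => (⟨i.1.1 / 21, by have := i.1.2; omega⟩, ⟨liftIdx ℓ i.1, i.2⟩)
      invFun := fun q =>
        ⟨⟨q.1.1 * 21 + q.2.1.1, by have h1 := q.1.2; have h2 := q.2.1.2; omega⟩, by
          have hv : liftIdx ℓ ⟨q.1.1 * 21 + q.2.1.1,
              by have h1 := q.1.2; have h2 := q.2.1.2; omega⟩ = q.2.1 := by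
            apply Fin.ext
            show (q.1.1 * 21 + q.2.1.1) % 21 = q.2.1.1
            have h2 := q.2.1.2; omega
          rw [hv]; exact q.2.2⟩
      left_inv := fun i => by
        apply Subtype.ext; apply Fin.ext
        show i.1.1 / 21 * 21 + i.1.1 % 21 = i.1.1
        omega
      right_inv := fun q => by
        have h2 := q.2.1.2
        refine Prod.ext (Fin.ext ?_) (Subtype.ext (Fin.ext ?_))
        · show (q.1.1 * 21 + q.2.1.1) / 21 = q.1.1; omega
        · show (q.1.1 * 21 + q.2.1.1) % 21 = q.2.1.1; omega }
  rw [Nat.card_congr e, Nat.card_prod]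
  simp [Nat.card_eq_fintype_card]

lemma card_mod_pair (ℓ : ℕ) (P : Fin 21 → Fin 21 → Prop) [∀ a b, Decidable (P a b)] :
    Nat.card {p : Fin (ℓ * 21) × Fin 21 // P (liftIdx ℓ p.1) p.2} =
      ℓ * Nat.card {q : Fin 21 × Fin 21 // P q.1 q.2} := by
  have e : {p : Fin (ℓ * 21) × Fin 21 // P (liftIdx ℓ p.1) p.2} ≃
      Fin ℓ × {q : Fin 21 × Fin 21 // P q.1 q.2} :=
    { toFun := fun p => (⟨p.1.1.1 / 21, by have := p.1.1.2; omega⟩,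
        ⟨(liftIdx ℓ p.1.1, p.1.2), p.2⟩)
      invFun := fun q =>
        ⟨(⟨q.1.1 * 21 + q.2.1.1.1, by have h1 := q.1.2; have h2 := q.2.1.1.2; omega⟩,
          q.2.1.2), by
          have hv : liftIdx ℓ ⟨q.1.1 * 21 + q.2.1.1.1,
              by have h1 := q.1.2; have h2 := q.2.1.1.2; omega⟩ = q.2.1.1 := by
            apply Fin.ext
            show (q.1.1 * 21 + q.2.1.1.1) % 21 = q.2.1.1.1
            have h2 := q.2.1.1.2; omega
          rw [hv]; exact q.2.2⟩
      left_inv := fun p => by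
        refine Subtype.ext (Prod.ext (Fin.ext ?_) rfl)
        show p.1.1.1 / 21 * 21 + p.1.1.1 % 21 = p.1.1.1
        omega
      right_inv := fun q => by
        have h2 := q.2.1.1.2
        refine Prod.ext (Fin.ext ?_) (Subtype.ext (Prod.ext (Fin.ext ?_) rfl))
        · show (q.1.1 * 21 + q.2.1.1.1) / 21 = q.1.1; omega
        · show (q.1.1 * 21 + q.2.1.1.1) % 21 = q.2.1.1.1; omega }
  rw [Nat.card_congr e, Nat.card_prod]
  simp [Nat.card_eq_fintype_card]

theorem roman2_design_21 (ℓ : ℕ) (hℓ : 0 < ℓ) :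
    ∃ D : Fin (ℓ * 21) → Fin 21 → Fin 21, IsRomanDesign (ℓ * 21) 21 2 D := by
  refine ⟨fun i j => baseB (liftIdx ℓ i) j, ⟨⟨dvd_mul_left 21 ℓ, fun i => baseB_bijective _, ?_⟩,
    ?_⟩⟩
  · -- column counts
    intro j x
    rw [Nat.mul_div_cancel _ (by norm_num : (0:ℕ) < 21)]
    have := card_mod_eq ℓ (fun r => baseB r j = x)
    rw [this]
    have hone : Nat.card {r : Fin 21 // baseB r j = x} = 1 := by
      rw [Nat.card_eq_one_iff_unique]
      constructor
      · constructor
        intro ⟨r, hr⟩ ⟨r', hr'⟩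
        exact Subtype.ext (gmul_cancel r r' (seqA j) (hr.trans hr'.symm))
      · exact ⟨⟨gmul x (ginv (seqA j)), gmul_ginv_solve x (seqA j)⟩⟩
    rw [hone, mul_one]
  · -- pair counts
    intro d hd1 hd2 x y hxy
    have hd : d = 1 ∨ d = 2 := by omega
    rw [Nat.mul_div_cancel _ (by norm_num : (0:ℕ) < 21)]
    unfold designPairCount
    have := card_mod_pair ℓ (fun r c => ∃ h : (c : ℕ) + d < 21,
      baseB r c = x ∧ baseB r ⟨(c : ℕ) + d, h⟩ = y)
    rw [this]
    have hle : Nat.card {q : Fin 21 × Fin 21 // ∃ h : (q.2 : ℕ) + d < 21,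
        baseB q.1 q.2 = x ∧ baseB q.1 ⟨(q.2 : ℕ) + d, h⟩ = y} ≤ 1 := by
      rw [Nat.card_eq_fintype_card, Fintype.card_le_one_iff_subsingleton]
      constructor
      intro ⟨⟨r, c⟩, hb, h1, h2⟩ ⟨⟨r', c'⟩, hb', h1', h2'⟩
      obtain ⟨hr, hc⟩ := key_unique hd r r' c c' hb hb' (h1.trans h1'.symm) (h2.trans h2'.symm)
      exact Subtype.ext (Prod.ext hr hc)
    calc ℓ * Nat.card {q : Fin 21 × Fin 21 // ∃ h : (q.2 : ℕ) + d < 21,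
        baseB q.1 q.2 = x ∧ baseB q.1 ⟨(q.2 : ℕ) + d, h⟩ = y} ≤ ℓ * 1 :=
          Nat.mul_le_mul_left ℓ hle
      _ = ℓ := mul_one ℓ
end

section
/- Let G be a finite group of order t ≥ 2 and let k, ℓ be positive integers with k ≤ t − 1. If G has a Roman-k ℓ-tuple, then there exists an ℓt × t Roman-k design. -/
/-- A Roman-`k` `ℓ`-tuple for a group `G` of order `t`: a sequence of `ℓ` orderings
of the elements of `G` such that for each `1 ≤ d ≤ k` and each non-identity `g`,
the number of pairs `(r, j)` with `(a r j)⁻¹ * (a r (j + d)) = g` is at most `ℓ`. -/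
def IsRomanTuple (G : Type*) [Group G] [Fintype G] (t k ℓ : ℕ)
    (a : Fin ℓ → Fin t → G) : Prop :=
  (∀ r : Fin ℓ, Function.Bijective (a r)) ∧
  ∀ d : ℕ, 1 ≤ d → d ≤ k → ∀ g : G, g ≠ 1 →
    Nat.card {p : Fin ℓ × Fin t //
      ∃ h : (p.2 : ℕ) + d < t, (a p.1 p.2)⁻¹ * a p.1 ⟨(p.2 : ℕ) + d, h⟩ = g} ≤ ℓ

theorem roman_design_of_roman_tuple {G : Type*} [Group G] [Fintype G]
    (t k ℓ : ℕ) (ht : Fintype.card G = t) (ht2 : 2 ≤ t)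
    (hk : 0 < k) (hkt : k ≤ t - 1) (hℓ : 0 < ℓ)
    (a : Fin ℓ → Fin t → G) (ha : IsRomanTuple G t k ℓ a) :
    ∃ D : Fin (ℓ * t) → Fin t → Fin t, IsRomanDesign (ℓ * t) t k D := by
  obtain ⟨hbij, hcount⟩ := ha
  have ht0 : 0 < t := by omega
  have hdiv : ℓ * t / t = ℓ := Nat.mul_div_cancel ℓ ht0
  let e : G ≃ Fin t := Fintype.equivFinOfCardEq ht
  let ι : Fin (ℓ * t) ≃ Fin ℓ × Fin t := finProdFinEquiv.symm
  set D : Fin (ℓ * t) → Fin t → Fin t :=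
    fun i j => e (e.symm (ι i).2 * a (ι i).1 j) with hD
  refine ⟨D, ⟨⟨dvd_mul_left t ℓ, ?_, ?_⟩, ?_⟩⟩
  · intro i
    have : D i = fun j => ((Equiv.mulLeft (e.symm (ι i).2)).trans e) (a (ι i).1 j) := rfl
    rw [this]
    exact (((Equiv.mulLeft (e.symm (ι i).2)).trans e).bijective).comp (hbij (ι i).1)
  · intro j x
    rw [hdiv]
    have E : {i : Fin (ℓ * t) // D i j = x} ≃ Fin ℓ :=
      { toFun := fun i => (ι i.1).1
        invFun := fun r => ⟨ι.symm (r, e (e.symm x * (a r j)⁻¹)), by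
          simp [hD, inv_mul_cancel_right]⟩
        left_inv := by
          rintro ⟨i, hi⟩
          have h1 : e.symm (ι i).2 * a (ι i).1 j = e.symm x := by
            have := congrArg e.symm hi
            simpa [hD] using this
          have h2 : e (e.symm x * (a (ι i).1 j)⁻¹) = (ι i).2 := by
            rw [← h1]; simp [mul_inv_cancel_right]
          apply Subtype.ext
          simp only [h2]
          exact ι.symm_apply_apply i
        right_inv := by
          intro r
          simp }
    rw [Nat.card_congr E]
    simp
  · intro d hd1 hd2 x y hxy
    rw [designPairCount, hdiv]
    set g : G := (e.symm x)⁻¹ * e.symm y with hg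
    have hg1 : g ≠ 1 := by
      simp only [hg, ne_eq, inv_mul_eq_one]
      exact fun h => hxy (e.symm.injective h)
    set S := {p : Fin ℓ × Fin t //
      ∃ h : (p.2 : ℕ) + d < t, (a p.1 p.2)⁻¹ * a p.1 ⟨(p.2 : ℕ) + d, h⟩ = g}
    have key : ∀ (p : Fin (ℓ * t) × Fin t),
        (∃ h : (p.2 : ℕ) + d < t, D p.1 p.2 = x ∧ D p.1 ⟨(p.2 : ℕ) + d, h⟩ = y) →
        ∃ h : (p.2 : ℕ) + d < t,
          (a (ι p.1).1 p.2)⁻¹ * a (ι p.1).1 ⟨(p.2 : ℕ) + d, h⟩ = g := by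
      rintro p ⟨h, hx, hy⟩
      refine ⟨h, ?_⟩
      have hx' : e.symm (ι p.1).2 * a (ι p.1).1 p.2 = e.symm x := by
        have := congrArg e.symm hx; simpa [hD] using this
      have hy' : e.symm (ι p.1).2 * a (ι p.1).1 ⟨(p.2 : ℕ) + d, h⟩ = e.symm y := by
        have := congrArg e.symm hy; simpa [hD] using this
      rw [hg, ← hx', ← hy']
      group
    set f : {p : Fin (ℓ * t) × Fin t //
        ∃ h : (p.2 : ℕ) + d < t, D p.1 p.2 = x ∧ D p.1 ⟨(p.2 : ℕ) + d, h⟩ = y} → S :=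
      fun p => ⟨((ι p.1.1).1, p.1.2), key p.1 p.2⟩ with hf
    have hfinj : Function.Injective f := by
      rintro ⟨⟨i, j⟩, hp⟩ ⟨⟨i', j'⟩, hp'⟩ heq
      have hval : (((ι i).1, j) : Fin ℓ × Fin t) = ((ι i').1, j') :=
        congrArg Subtype.val heq
      injection hval with hr hj
      apply Subtype.ext
      show ((i, j) : Fin (ℓ * t) × Fin t) = (i', j')
      obtain ⟨h, hx, -⟩ := hp
      obtain ⟨h', hx', -⟩ := hp'
      have e1 : e.symm (ι i).2 * a (ι i).1 j = e.symm x := by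
        have := congrArg e.symm hx; simpa [hD] using this
      have e2 : e.symm (ι i').2 * a (ι i').1 j' = e.symm x := by
        have := congrArg e.symm hx'; simpa [hD] using this
      have h2 : (ι i).2 = (ι i').2 := by
        apply e.symm.injective
        have := e1.trans e2.symm
        rw [hr, hj] at this
        exact mul_right_cancel this
      exact Prod.ext_iff.mpr ⟨ι.injective (Prod.ext_iff.mpr ⟨hr, h2⟩), hj⟩
    calc Nat.card {p : Fin (ℓ * t) × Fin t //
          ∃ h : (p.2 : ℕ) + d < t, D p.1 p.2 = x ∧ D p.1 ⟨(p.2 : ℕ) + d, h⟩ = y}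
        ≤ Nat.card S := Nat.card_le_card_of_injective f hfinj
      _ ≤ ℓ := hcount d hd1 hd2 g hg1
end

section
/- Let G be a finite group of order t with an automorphism α of order ℓ, and let k be a positive integer with k ≤ t − 1. If a is a Roman-k pseudoterrace for G with respect to α, then the sequence of orderings (α¹ ∘ a, α² ∘ a, …, α^ℓ ∘ a) is a Roman-k ℓ-tuple for G. -/
/-- The cycle (orbit) of `g` under an automorphism `α` of order `ℓ`:
`{α^s g : 1 ≤ s ≤ ℓ}`. -/
def mulCycle {G : Type*} [Group G] (α : MulAut G) (ℓ : ℕ) (g : G) : Set G :=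
  {x | ∃ s : ℕ, 1 ≤ s ∧ s ≤ ℓ ∧ (α ^ s) g = x}

/-- A Roman-`k` pseudoterrace for `G` with respect to an automorphism `α` of order `ℓ`:
an ordering `a` of the elements of `G` such that for each non-identity `g` and each
`1 ≤ d ≤ k`, the number of indices `j` with `(a j)⁻¹ * a (j + d)` in the cycle of `g`
is at most the size of that cycle. -/
def IsRomanPseudoterrace {G : Type*} [Group G] [Fintype G] (t k : ℕ)
    (α : MulAut G) (ℓ : ℕ) (a : Fin t → G) : Prop :=
  Function.Bijective a ∧
  ∀ g : G, g ≠ 1 → ∀ d : ℕ, 1 ≤ d → d ≤ k →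
    Nat.card {j : Fin t //
        ∃ h : (j : ℕ) + d < t, (a j)⁻¹ * a ⟨(j : ℕ) + d, h⟩ ∈ mulCycle α ℓ g}
      ≤ Nat.card (mulCycle α ℓ g)

theorem roman_tuple_of_pseudoterrace {G : Type*} [Group G] [Fintype G]
    (t k ℓ : ℕ) (ht : Fintype.card G = t) (hk : 0 < k) (hkt : k ≤ t - 1)
    (α : MulAut G) (hα : orderOf α = ℓ)
    (a : Fin t → G) (ha : IsRomanPseudoterrace t k α ℓ a) :
    IsRomanTuple G t k ℓ (fun r j => (α ^ ((r : ℕ) + 1)) (a j)) := by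
  obtain ⟨hbij, hcount⟩ := ha
  constructor
  · intro r
    exact ((α ^ ((r : ℕ) + 1)).bijective).comp hbij
  intro d hd1 hdk g hg
  show Nat.card {p : Fin ℓ × Fin t //
      ∃ h : (p.2 : ℕ) + d < t,
        ((α ^ ((p.1 : ℕ) + 1)) (a p.2))⁻¹ *
          (α ^ ((p.1 : ℕ) + 1)) (a ⟨(p.2 : ℕ) + d, h⟩) = g} ≤ ℓ
  rcases Nat.eq_zero_or_pos ℓ with hℓ0 | hℓ
  · subst hℓ0
    haveI : IsEmpty {p : Fin 0 × Fin t //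
        ∃ h : (p.2 : ℕ) + d < t,
          ((α ^ ((p.1 : ℕ) + 1)) (a p.2))⁻¹ *
            (α ^ ((p.1 : ℕ) + 1)) (a ⟨(p.2 : ℕ) + d, h⟩) = g} := ⟨fun p => p.1.1.elim0⟩
    simp
  have hα1 : α ^ ℓ = 1 := by rw [← hα]; exact pow_orderOf_eq_one α
  have hmod : ∀ n : ℕ, α ^ (n % ℓ) = α ^ n := by
    intro n
    conv_rhs => rw [← Nat.div_add_mod n ℓ]
    rw [pow_add, pow_mul, hα1, one_pow, one_mul]
  have happ : ∀ (m n : ℕ) (y : G), (α ^ (m + n)) y = (α ^ m) ((α ^ n) y) := by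
    intro m n y
    rw [pow_add, MulAut.mul_apply]
  have hcyc : ∀ n : ℕ, (α ^ n) g ∈ mulCycle α ℓ g := by
    intro n
    refine ⟨if n % ℓ = 0 then ℓ else n % ℓ, ?_, ?_, ?_⟩
    · split_ifs with h
      · exact hℓ
      · exact Nat.one_le_iff_ne_zero.2 h
    · split_ifs with h
      · exact le_rfl
      · exact le_of_lt (Nat.mod_lt _ hℓ)
    · split_ifs with h
      · rw [hα1, ← hmod n, h, pow_zero]
      · rw [hmod n]
  -- choose exponents for elements of the cycle
  have he0 : ∀ x : G, ∃ n : ℕ, x ∈ mulCycle α ℓ g → (α ^ n) g = x := by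
    intro x
    by_cases hx : x ∈ mulCycle α ℓ g
    · obtain ⟨s, _, _, hs⟩ := hx
      exact ⟨s, fun _ => hs⟩
    · exact ⟨0, fun h => absurd h hx⟩
  choose e he using he0
  -- from a pair to the pseudoterrace condition
  have key : ∀ p : {p : Fin ℓ × Fin t //
      ∃ h : (p.2 : ℕ) + d < t,
        ((α ^ ((p.1 : ℕ) + 1)) (a p.2))⁻¹ *
          (α ^ ((p.1 : ℕ) + 1)) (a ⟨(p.2 : ℕ) + d, h⟩) = g},
      ∃ h : ((p.1.2 : ℕ) + d < t),
        (a p.1.2)⁻¹ * a ⟨(p.1.2 : ℕ) + d, h⟩ ∈ mulCycle α ℓ g := by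
    rintro ⟨⟨r, j⟩, hh, heq⟩
    refine ⟨hh, ?_⟩
    have hx : (α ^ ((r : ℕ) + 1)) ((a j)⁻¹ * a ⟨(j : ℕ) + d, hh⟩) = g := by
      rw [map_mul, map_inv]; exact heq
    have hxe : (a j)⁻¹ * a ⟨(j : ℕ) + d, hh⟩ = (α ^ ((ℓ - 1) * ((r : ℕ) + 1))) g := by
      rw [← hx, ← happ]
      have hmul : (ℓ - 1) * ((r : ℕ) + 1) + ((r : ℕ) + 1) = ℓ * ((r : ℕ) + 1) := by
        rw [Nat.sub_one_mul]
        exact Nat.sub_add_cancel (Nat.le_mul_of_pos_left _ hℓ)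
      rw [hmul, pow_mul, hα1, one_pow, MulAut.one_apply]
    rw [hxe]
    exact hcyc _
  have step1 : Nat.card {p : Fin ℓ × Fin t //
      ∃ h : (p.2 : ℕ) + d < t,
        ((α ^ ((p.1 : ℕ) + 1)) (a p.2))⁻¹ *
          (α ^ ((p.1 : ℕ) + 1)) (a ⟨(p.2 : ℕ) + d, h⟩) = g} ≤
      Nat.card ({j : Fin t //
          ∃ h : (j : ℕ) + d < t, (a j)⁻¹ * a ⟨(j : ℕ) + d, h⟩ ∈ mulCycle α ℓ g} ×
        {s : Fin ℓ // (α ^ (s : ℕ)) g = g}) := by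
    have hfix : ∀ p : {p : Fin ℓ × Fin t //
        ∃ h : (p.2 : ℕ) + d < t,
          ((α ^ ((p.1 : ℕ) + 1)) (a p.2))⁻¹ *
            (α ^ ((p.1 : ℕ) + 1)) (a ⟨(p.2 : ℕ) + d, h⟩) = g},
        (α ^ (((p.1.1 : ℕ) + 1 +
          e ((a p.1.2)⁻¹ * a ⟨(p.1.2 : ℕ) + d, (key p).choose⟩)) % ℓ)) g = g := by
      intro p
      rw [hmod, happ, he _ (key p).choose_spec]
      obtain ⟨⟨r, j⟩, hp⟩ := p
      have hp' := hp
      obtain ⟨hh, heq⟩ := hp'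
      rw [map_mul, map_inv]
      exact heq
    refine Nat.card_le_card_of_injective
      (fun p => (⟨p.1.2, key p⟩,
        ⟨⟨((p.1.1 : ℕ) + 1 +
            e ((a p.1.2)⁻¹ * a ⟨(p.1.2 : ℕ) + d, (key p).choose⟩)) % ℓ,
          Nat.mod_lt _ hℓ⟩, hfix p⟩)) ?_
    rintro ⟨⟨r₁, j₁⟩, hp₁⟩ ⟨⟨r₂, j₂⟩, hp₂⟩ hEq
    simp only [Prod.mk.injEq, Subtype.mk.injEq, Fin.mk.injEq] at hEq
    obtain ⟨hj, hm⟩ := hEq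
    subst hj
    have hEe : e ((a j₁)⁻¹ * a ⟨(j₁ : ℕ) + d, (key ⟨(r₂, j₁), hp₂⟩).choose⟩) =
        e ((a j₁)⁻¹ * a ⟨(j₁ : ℕ) + d, (key ⟨(r₁, j₁), hp₁⟩).choose⟩) := rfl
    rw [hEe] at hm
    set E := e ((a j₁)⁻¹ * a ⟨(j₁ : ℕ) + d, (key ⟨(r₁, j₁), hp₁⟩).choose⟩) with hE
    have h3 : ((r₁ : ℕ) + (1 + E)) % ℓ = ((r₂ : ℕ) + (1 + E)) % ℓ := by
      rw [← add_assoc, ← add_assoc]; exact hm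
    have h4 : (r₁ : ℕ) % ℓ = (r₂ : ℕ) % ℓ := Nat.ModEq.add_right_cancel' _ h3
    have h5 : (r₁ : ℕ) = (r₂ : ℕ) := by
      rwa [Nat.mod_eq_of_lt r₁.isLt, Nat.mod_eq_of_lt r₂.isLt] at h4
    have h6 : r₁ = r₂ := Fin.ext h5
    subst h6
    rfl
  have hv : ∀ (x : G) (hx : x ∈ mulCycle α ℓ g) (s : Fin ℓ), (α ^ (s : ℕ)) g = g →
      (α ^ ((e x + (s : ℕ)) % ℓ)) g = x := by
    intro x hx s hs
    rw [hmod, happ, hs, he x hx]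
  have step3 : Nat.card ((mulCycle α ℓ g) × {s : Fin ℓ // (α ^ (s : ℕ)) g = g}) ≤
      Nat.card (Fin ℓ) := by
    refine Nat.card_le_card_of_injective
      (fun q => (⟨(e q.1.1 + (q.2.1 : ℕ)) % ℓ, Nat.mod_lt _ hℓ⟩ : Fin ℓ)) ?_
    rintro ⟨⟨x₁, hx₁⟩, ⟨s₁, hs₁⟩⟩ ⟨⟨x₂, hx₂⟩, ⟨s₂, hs₂⟩⟩ hEq
    simp only [Fin.mk.injEq] at hEq
    have h1 : x₁ = x₂ := by
      rw [← hv x₁ hx₁ s₁ hs₁, ← hv x₂ hx₂ s₂ hs₂, hEq]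
    subst h1
    have h3 : ((e x₁ + (s₁ : ℕ)) % ℓ) = ((e x₁ + (s₂ : ℕ)) % ℓ) := hEq
    have h4 : (s₁ : ℕ) % ℓ = (s₂ : ℕ) % ℓ := Nat.ModEq.add_left_cancel' _ h3
    have h5 : (s₁ : ℕ) = (s₂ : ℕ) := by
      rwa [Nat.mod_eq_of_lt s₁.isLt, Nat.mod_eq_of_lt s₂.isLt] at h4
    have h6 : s₁ = s₂ := Fin.ext h5
    subst h6
    rfl
  calc Nat.card {p : Fin ℓ × Fin t //
      ∃ h : (p.2 : ℕ) + d < t,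
        ((α ^ ((p.1 : ℕ) + 1)) (a p.2))⁻¹ *
          (α ^ ((p.1 : ℕ) + 1)) (a ⟨(p.2 : ℕ) + d, h⟩) = g}
      ≤ Nat.card ({j : Fin t //
          ∃ h : (j : ℕ) + d < t, (a j)⁻¹ * a ⟨(j : ℕ) + d, h⟩ ∈ mulCycle α ℓ g} ×
        {s : Fin ℓ // (α ^ (s : ℕ)) g = g}) := step1
    _ = Nat.card {j : Fin t //
          ∃ h : (j : ℕ) + d < t, (a j)⁻¹ * a ⟨(j : ℕ) + d, h⟩ ∈ mulCycle α ℓ g} *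
        Nat.card {s : Fin ℓ // (α ^ (s : ℕ)) g = g} := Nat.card_prod _ _
    _ ≤ Nat.card (mulCycle α ℓ g) *
        Nat.card {s : Fin ℓ // (α ^ (s : ℕ)) g = g} :=
      Nat.mul_le_mul_right _ (hcount g hg d hd1 hdk)
    _ = Nat.card ((mulCycle α ℓ g) × {s : Fin ℓ // (α ^ (s : ℕ)) g = g}) :=
      (Nat.card_prod _ _).symm
    _ ≤ Nat.card (Fin ℓ) := step3
    _ = ℓ := by simp
end

section
/- Let p be an odd prime and ρ a primitive root of p (an element of ZMod p generating the multiplicative group of units). Let r = ρ · (ρ − 1)⁻¹ in ZMod p and let α be the automorphism of the additive group ZMod p given by x ↦ r·x, of order equal to the multiplicative order ℓ of r. Then the sequence (0, ρ, ρ², …, ρ^{p−1}) is a Roman-1 pseudoterrace for ZMod p with respect to α; equivalently, for each non-zero g ∈ ZMod p, the number of indices j with 1 ≤ j ≤ p − 1 for which the consecutive difference a_{j+1} − a_j lies in the orbit {r^s · g : 1 ≤ s ≤ ℓ} is at most the size of that orbit. -/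
theorem primitive_root_construction_is_roman_pseudoterrace
    (p : ℕ) (hp : Nat.Prime p) (hodd : Odd p)
    (ρ : ZMod p) (hρ : orderOf ρ = p - 1)
    (r : ZMod p) (hr : r = ρ * (ρ - 1)⁻¹)
    (ℓ : ℕ) (hℓ : ℓ = orderOf r)
    (a : Fin p → ZMod p)
    (haseq : ∀ j : Fin p, a j = if (j : ℕ) = 0 then 0 else ρ ^ (j : ℕ)) :
    Function.Bijective a ∧
    ∀ g : ZMod p, g ≠ 0 →
      Nat.card {j : Fin p // ∃ h : (j : ℕ) + 1 < p,
          a ⟨(j : ℕ) + 1, h⟩ - a j ∈ {x : ZMod p | ∃ s : ℕ, 1 ≤ s ∧ s ≤ ℓ ∧ r ^ s * g = x}}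
        ≤ Nat.card {x : ZMod p | ∃ s : ℕ, 1 ≤ s ∧ s ≤ ℓ ∧ r ^ s * g = x} := by
  haveI : Fact p.Prime := ⟨hp⟩
  have hp3 : 3 ≤ p := by
    have h1 := hp.two_le
    have h2 := Nat.odd_iff.mp hodd
    omega
  have hρ0 : ρ ≠ 0 := by
    intro h
    have h1 : ρ ^ orderOf ρ = 1 := pow_orderOf_eq_one ρ
    rw [hρ, h, zero_pow (by omega : p - 1 ≠ 0)] at h1
    exact zero_ne_one h1
  have hρ1 : ρ ≠ 1 := by
    intro h
    rw [h, orderOf_one] at hρ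
    omega
  have hρm1 : ρ - 1 ≠ 0 := sub_ne_zero.mpr hρ1
  have hr0 : r ≠ 0 := by
    rw [hr]; exact mul_ne_zero hρ0 (inv_ne_zero hρm1)
  have hfin : IsOfFinOrder r :=
    isOfFinOrder_iff_pow_eq_one.mpr
      ⟨p - 1, by omega, ZMod.pow_card_sub_one_eq_one hr0⟩
  have hℓpos : 0 < ℓ := hℓ ▸ hfin.orderOf_pos
  have hrℓ : r ^ ℓ = 1 := hℓ ▸ pow_orderOf_eq_one r
  -- key identity for the differences
  have hkey : ∀ j : ℕ, ρ ^ (j + 1) - ρ ^ j = ρ ^ (j + 1) * r⁻¹ := by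
    intro j
    rw [hr, pow_succ]
    field_simp
  -- power injectivity
  have haux : ∀ i j : ℕ, 1 ≤ i → i ≤ j → j ≤ p - 1 → ρ ^ i = ρ ^ j → i = j := by
    intro i j hi hij hjp heq
    by_contra hne
    have h1 : ρ ^ j = ρ ^ i * ρ ^ (j - i) := by
      rw [← pow_add]; congr 1; omega
    rw [h1] at heq
    have h2 : ρ ^ (j - i) = 1 :=
      mul_left_cancel₀ (pow_ne_zero i hρ0) (by rw [mul_one]; exact heq.symm)
    have h3 : orderOf ρ ∣ j - i := orderOf_dvd_of_pow_eq_one h2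
    rw [hρ] at h3
    have := Nat.le_of_dvd (by omega) h3
    omega
  have hpinj : ∀ i j : ℕ, 1 ≤ i → i ≤ p - 1 → 1 ≤ j → j ≤ p - 1 → ρ ^ i = ρ ^ j → i = j := by
    intro i j hi hi' hj hj' heq
    rcases Nat.le_total i j with h | h
    · exact haux i j hi h hj' heq
    · exact (haux j i hj h hi' heq.symm).symm
  constructor
  · -- bijectivity of a
    rw [Fintype.bijective_iff_injective_and_card]
    refine ⟨?_, by simp [ZMod.card]⟩
    intro i j hij
    rw [haseq, haseq] at hij
    have hi := i.isLt
    have hj := j.isLt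
    by_cases h1 : (i : ℕ) = 0 <;> by_cases h2 : (j : ℕ) = 0
    · exact Fin.ext (by omega)
    · simp only [h1, h2, if_pos, if_neg, if_true] at hij
      exact absurd hij.symm (pow_ne_zero _ hρ0)
    · simp only [h1, h2, if_pos, if_neg, if_true] at hij
      exact absurd hij (pow_ne_zero _ hρ0)
    · simp only [h1, h2, if_neg] at hij
      exact Fin.ext (hpinj _ _ (by omega) (by omega) (by omega) (by omega) hij)
  · intro g hg
    set S : Set (ZMod p) := {x : ZMod p | ∃ s : ℕ, 1 ≤ s ∧ s ≤ ℓ ∧ r ^ s * g = x} with hS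
    -- S is closed under multiplication by r⁻¹
    have hstep : ∀ x ∈ S, r⁻¹ * x ∈ S := by
      rintro x ⟨s, hs1, hs2, rfl⟩
      rcases Nat.lt_or_ge s 2 with h | h
      · have hs : s = 1 := by omega
        refine ⟨ℓ, hℓpos, le_refl ℓ, ?_⟩
        rw [hrℓ, one_mul, hs, pow_one, ← mul_assoc, inv_mul_cancel₀ hr0, one_mul]
      · refine ⟨s - 1, by omega, by omega, ?_⟩
        have : r ^ s = r * r ^ (s - 1) := by
          rw [← pow_succ']; congr 1; omega
        rw [this, ← mul_assoc, ← mul_assoc, inv_mul_cancel₀ hr0, one_mul]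
    -- the injection from the index set into S
    have hmem : ∀ j : {j : Fin p // ∃ h : (j : ℕ) + 1 < p,
        a ⟨(j : ℕ) + 1, h⟩ - a j ∈ S}, ρ ^ (((j : Fin p) : ℕ) + 1) * r⁻¹ ∈ S := by
      rintro ⟨j, hlt, hj⟩
      rw [haseq, haseq] at hj
      simp only at hj
      by_cases h0 : (j : ℕ) = 0
      · rw [h0] at hj ⊢
        norm_num at hj ⊢
        have := hstep _ hj
        rwa [mul_comm] at this
      · rw [if_neg (by omega : ¬((j : ℕ) + 1 = 0)), if_neg h0, hkey] at hj
        exact hj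
    set T := {j : Fin p // ∃ h : (j : ℕ) + 1 < p, a ⟨(j : ℕ) + 1, h⟩ - a j ∈ S} with hT
    have hinj : Function.Injective (fun j : T => (⟨ρ ^ (((j : Fin p) : ℕ) + 1) * r⁻¹, hmem j⟩ : S)) := by
      intro j1 j2 heq
      have heq' : ρ ^ (((j1 : Fin p) : ℕ) + 1) * r⁻¹ = ρ ^ (((j2 : Fin p) : ℕ) + 1) * r⁻¹ :=
        congrArg Subtype.val heq
      have heq2 := mul_right_cancel₀ (inv_ne_zero hr0) heq'
      obtain ⟨h1, -⟩ := j1.2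
      obtain ⟨h2, -⟩ := j2.2
      have h3 := hpinj (((j1 : Fin p) : ℕ) + 1) (((j2 : Fin p) : ℕ) + 1) (by omega)
        (by omega) (by omega) (by omega) heq2
      exact Subtype.ext (Fin.ext (by omega))
    exact Nat.card_le_card_of_injective _ hinj
end

section
/- For each pair (t, ℓ) in the set {(61,10), (71,14), (79,13), (101,20), (109,18), (113,16), (131,26), (151,25), (157,26), (181,36), (191,38), (211,42), (239,34), (251,50), (281,35)}, there exists an ℓt × t Vatican design. -/
open Finset

/-- `0, g0^0, g0^1, ...` as natural numbers mod `t`. -/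
def sNat (t g0 j : ℕ) : ℕ := if j = 0 then 0 else g0 ^ (j - 1) % t

/-- `((σ (j+d) - σ j) ^ ℓ) mod t` as a natural number. -/
def fNat (t g0 ℓ d j : ℕ) : ℕ := (sNat t g0 (j + d) + (t - sNat t g0 j)) ^ ℓ % t

lemma sNat_lt (t g0 j : ℕ) (ht : 0 < t) : sNat t g0 j < t := by
  unfold sNat; split
  · exact ht
  · exact Nat.mod_lt _ ht

lemma fNat_lt (t g0 ℓ d j : ℕ) (ht : 0 < t) : fNat t g0 ℓ d j < t := Nat.mod_lt _ ht

/-- Key counting lemma: if `f` is `k`-periodic on `[1, ∞)`, injective on `[1, k]`,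
and collisions with `f 0` happen only near the end, then every value is attained
at most `ℓ` times on `[0, N)`. -/
lemma card_filter_le_of_periodic {α : Type*} [DecidableEq α] (f : ℕ → α) (k ℓ N : ℕ)
    (hk : 0 < k) (hl : 0 < ℓ) (hN : N ≤ k * ℓ)
    (hper : ∀ j, 1 ≤ j → f (j + k) = f j)
    (hinj : ∀ a b, 1 ≤ a → a ≤ k → a < N → 1 ≤ b → b ≤ k → b < N → f a = f b → a = b)
    (h0 : ∀ j, 1 ≤ j → j ≤ k → j < N → f j = f 0 → N ≤ j + k * (ℓ - 1))
    (w : α) :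
    ((Finset.range N).filter (fun j => f j = w)).card ≤ ℓ := by
  classical
  -- pull back any index ≥ 1 to a congruent representative in [1, k]
  have pull : ∀ j, 1 ≤ j → ∃ a, 1 ≤ a ∧ a ≤ k ∧ a ≤ j ∧ k ∣ (j - a) ∧ f a = f j := by
    intro j hj
    induction j using Nat.strong_induction_on with
    | _ j ih =>
      by_cases hjk : j ≤ k
      · exact ⟨j, hj, hjk, le_refl j, by simp, rfl⟩
      · obtain ⟨a, h1, h2, h3, h4, h5⟩ := ih (j - k) (by omega) (by omega)
        refine ⟨a, h1, h2, by omega, ?_, ?_⟩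
        · have : j - a = (j - k - a) + k := by omega
          rw [this]
          exact Nat.dvd_add h4 dvd_rfl
        · have : (j - k) + k = j := by omega
          rw [h5, ← this, hper (j - k) (by omega), this]
  set S : Finset ℕ := (Finset.range N).filter (fun j => f j = w) with hS
  set S' : Finset ℕ := (Finset.range N).filter (fun j => 1 ≤ j ∧ f j = w) with hS'
  have hmemS' : ∀ j, j ∈ S' ↔ j < N ∧ 1 ≤ j ∧ f j = w := by
    intro j; simp [hS']
  by_cases hne : S'.Nonempty
  · set j0 := S'.min' hne with hj0
    have hj0mem : j0 ∈ S' := S'.min'_mem hne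
    rw [hmemS'] at hj0mem
    obtain ⟨hj0N, hj01, hj0w⟩ := hj0mem
    -- j0 ≤ k
    obtain ⟨a, ha1, hak, haj, hadvd, haf⟩ := pull j0 hj01
    have haS' : a ∈ S' := by
      rw [hmemS']
      exact ⟨by omega, ha1, by rw [haf]; exact hj0w⟩
    have hj0le : j0 ≤ a := S'.min'_le a haS'
    have hj0k : j0 ≤ k := by omega
    -- every member of S' is of the form j0 + i * k
    have hform : ∀ j ∈ S', ∃ i, j = j0 + i * k ∧ j0 + i * k < N := by
      intro j hj
      rw [hmemS'] at hj
      obtain ⟨hjN, hj1, hjw⟩ := hj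
      obtain ⟨b, hb1, hbk, hbj, hbdvd, hbf⟩ := pull j hj1
      have hab : b = a := by
        apply hinj b a hb1 hbk (by omega) ha1 hak (by omega)
        rw [hbf, haf, hjw, hj0w]
      have hjge : j0 ≤ j := S'.min'_le j (by rw [hmemS']; exact ⟨hjN, hj1, hjw⟩)
      -- k ∣ j - j0
      have hdvd : k ∣ j - j0 := by
        obtain ⟨c1, hc1⟩ := hbdvd
        obtain ⟨c2, hc2⟩ := hadvd
        subst hab
        have : j - j0 = k * c1 - k * c2 := by omega
        rw [this]
        exact Nat.dvd_sub (Dvd.intro _ rfl) (Dvd.intro _ rfl)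
      obtain ⟨i, hi⟩ := hdvd
      have hik : i * k = k * i := Nat.mul_comm _ _
      exact ⟨i, by omega, by omega⟩
    by_cases h0w : f 0 = w
    · -- extra occurrence at 0; use h0 to bound
      have hbound := h0 j0 hj01 hj0k hj0N (by rw [hj0w, h0w])
      have himg : S' ⊆ (Finset.range (ℓ - 1)).image (fun i => j0 + i * k) := by
        intro j hj
        obtain ⟨i, hij, hiN⟩ := hform j hj
        refine Finset.mem_image.mpr ⟨i, Finset.mem_range.mpr ?_, hij.symm⟩
        by_contra hc
        push_neg at hc
        have : j0 + (ℓ - 1) * k ≤ j0 + i * k := by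
          have := Nat.mul_le_mul_right k hc
          omega
        have hkl : k * (ℓ - 1) = (ℓ - 1) * k := Nat.mul_comm _ _
        omega
      have hcard' : S'.card ≤ ℓ - 1 :=
        le_trans (Finset.card_le_card himg)
          (le_trans Finset.card_image_le (by simp))
      have hsub : S ⊆ insert 0 S' := by
        intro j hj
        simp only [hS, Finset.mem_filter, Finset.mem_range] at hj
        rcases Nat.eq_zero_or_pos j with rfl | hj1
        · exact Finset.mem_insert_self _ _
        · exact Finset.mem_insert_of_mem (by rw [hmemS']; exact ⟨hj.1, hj1, hj.2⟩)
      calc S.card ≤ (insert 0 S').card := Finset.card_le_card hsub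
        _ ≤ S'.card + 1 := Finset.card_insert_le _ _
        _ ≤ (ℓ - 1) + 1 := by omega
        _ = ℓ := by omega
    · -- no occurrence at 0
      have himg : S' ⊆ (Finset.range ℓ).image (fun i => j0 + i * k) := by
        intro j hj
        obtain ⟨i, hij, hiN⟩ := hform j hj
        refine Finset.mem_image.mpr ⟨i, Finset.mem_range.mpr ?_, hij.symm⟩
        by_contra hc
        push_neg at hc
        have : ℓ * k ≤ i * k := Nat.mul_le_mul_right k hc
        have hkl : k * ℓ = ℓ * k := Nat.mul_comm _ _
        omega
      have hsub : S ⊆ S' := by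
        intro j hj
        simp only [hS, Finset.mem_filter, Finset.mem_range] at hj
        rcases Nat.eq_zero_or_pos j with rfl | hj1
        · exact absurd hj.2 h0w
        · rw [hmemS']; exact ⟨hj.1, hj1, hj.2⟩
      calc S.card ≤ S'.card := Finset.card_le_card hsub
        _ ≤ ℓ := le_trans (Finset.card_le_card himg)
            (le_trans Finset.card_image_le (by simp))
  · -- S' empty : S ⊆ {0}
    have hsub : S ⊆ {0} := by
      intro j hj
      simp only [hS, Finset.mem_filter, Finset.mem_range] at hj
      rcases Nat.eq_zero_or_pos j with rfl | hj1
      · exact Finset.mem_singleton_self 0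
      · exact absurd ⟨j, by rw [hmemS']; exact ⟨hj.1, hj1, hj.2⟩⟩ hne
    calc S.card ≤ 1 := by simpa using Finset.card_le_card hsub
      _ ≤ ℓ := hl

/-- The design: row `r` decodes to `(m, c)`; entry at column `j` is `c + u m * σ j`. -/
def vatD (t ℓ : ℕ) [NeZero t] (u : Fin ℓ → ZMod t) (σ : ℕ → ZMod t) :
    Fin (ℓ * t) → Fin t → Fin t := fun r j =>
  ⟨((((finProdFinEquiv.symm r).2 : ℕ) : ZMod t)
      + u (finProdFinEquiv.symm r).1 * σ (j : ℕ)).val, ZMod.val_lt _⟩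

lemma vatD_eq_iff (t ℓ : ℕ) [NeZero t] (u : Fin ℓ → ZMod t) (σ : ℕ → ZMod t)
    (r : Fin (ℓ * t)) (j x : Fin t) :
    vatD t ℓ u σ r j = x ↔
      (((finProdFinEquiv.symm r).2 : ℕ) : ZMod t)
        + u (finProdFinEquiv.symm r).1 * σ (j : ℕ) = ((x : ℕ) : ZMod t) := by
  constructor
  · intro h
    have hv := congrArg Fin.val h
    simp only [vatD] at hv
    conv_lhs => rw [← ZMod.natCast_rightInverse
      ((((finProdFinEquiv.symm r).2 : ℕ) : ZMod t)
        + u (finProdFinEquiv.symm r).1 * σ (j : ℕ))]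
    rw [hv]
  · intro h
    apply Fin.ext
    simp only [vatD]
    rw [h, ZMod.val_cast_of_lt x.isLt]

theorem exists_vatican_general (t ℓ k g0 : ℕ) (hp : Nat.Prime t) (hl : 0 < ℓ)
    (hkl : k * ℓ = t - 1)
    (hordg : orderOf ((g0 : ℕ) : ZMod t) = t - 1)
    (hinjF : ∀ d : ℕ, d < t → 1 ≤ d → ∀ a b : ℕ, 1 ≤ a → a ≤ k → a < t - d →
      1 ≤ b → b ≤ k → b < t - d → fNat t g0 ℓ d a = fNat t g0 ℓ d b → a = b)
    (h0F : ∀ d : ℕ, d < t → 1 ≤ d → ∀ j : ℕ, 1 ≤ j → j ≤ k → j < t - d →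
      fNat t g0 ℓ d j = fNat t g0 ℓ d 0 → t - d ≤ j + k * (ℓ - 1)) :
    ∃ D : Fin (ℓ * t) → Fin t → Fin t, IsVaticanDesign (ℓ * t) t D := by
  haveI : NeZero t := ⟨hp.pos.ne'⟩
  have ht1 : 1 < t := hp.one_lt
  have ht0 : 0 < t := hp.pos
  have htm : 0 < t - 1 := by omega
  have hk0 : 0 < k := by
    rcases Nat.eq_zero_or_pos k with rfl | h
    · simp at hkl; omega
    · exact h
  haveI : Fact (Nat.Prime t) := ⟨hp⟩
  set g : ZMod t := ((g0 : ℕ) : ZMod t) with hgdef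
  have hg1 : g ^ (t - 1) = 1 := by rw [← hordg]; exact pow_orderOf_eq_one g
  have hgne : g ≠ 0 := by
    intro h
    rw [h, zero_pow htm.ne'] at hg1
    exact zero_ne_one hg1
  -- σ
  set σ : ℕ → ZMod t := fun j => ((sNat t g0 j : ℕ) : ZMod t) with hσdef
  have hσ0 : σ 0 = 0 := by simp [hσdef, sNat]
  have hσs : ∀ j : ℕ, 1 ≤ j → σ j = g ^ (j - 1) := by
    intro j hj
    have : j ≠ 0 := by omega
    simp [hσdef, sNat, this, ZMod.natCast_mod, Nat.cast_pow, hgdef]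
  have hσinj : ∀ a b : ℕ, a < t → b < t → σ a = σ b → a = b := by
    intro a b ha hb hab
    rcases Nat.eq_zero_or_pos a with rfl | ha0
    · rcases Nat.eq_zero_or_pos b with rfl | hb0
      · rfl
      · rw [hσ0, hσs b hb0] at hab
        exact absurd hab.symm (pow_ne_zero _ hgne)
    · rcases Nat.eq_zero_or_pos b with rfl | hb0
      · rw [hσs a ha0, hσ0] at hab
        exact absurd hab (pow_ne_zero _ hgne)
      · rw [hσs a ha0, hσs b hb0] at hab
        have h1 : a - 1 ∈ Set.Iio (orderOf g) := by rw [hordg]; simp; omega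
        have h2 : b - 1 ∈ Set.Iio (orderOf g) := by rw [hordg]; simp; omega
        have := pow_injOn_Iio_orderOf h1 h2 hab
        omega
  -- u
  set u : Fin ℓ → ZMod t := fun m => g ^ (k * (m : ℕ)) with hudef
  have hu1 : ∀ m, u m ^ ℓ = 1 := by
    intro m
    rw [hudef]
    dsimp only
    rw [← pow_mul]
    have h : k * (m : ℕ) * ℓ = (t - 1) * (m : ℕ) := by rw [← hkl]; ring
    rw [h, pow_mul, hg1, one_pow]
  have hu0 : ∀ m, u m ≠ 0 := by
    intro m h
    have := hu1 m
    rw [h, zero_pow hl.ne'] at this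
    exact zero_ne_one this
  have huinj : Function.Injective u := by
    intro m m' h
    have h1 : k * (m : ℕ) ∈ Set.Iio (orderOf g) := by
      rw [hordg, ← hkl]
      exact Set.mem_Iio.mpr ((Nat.mul_lt_mul_left hk0).mpr m.isLt)
    have h2 : k * (m' : ℕ) ∈ Set.Iio (orderOf g) := by
      rw [hordg, ← hkl]
      exact Set.mem_Iio.mpr ((Nat.mul_lt_mul_left hk0).mpr m'.isLt)
    have := pow_injOn_Iio_orderOf h1 h2 h
    exact Fin.ext (Nat.eq_of_mul_eq_mul_left hk0 this)
  -- cast of fNat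
  have hfcast : ∀ d j : ℕ, ((fNat t g0 ℓ d j : ℕ) : ZMod t) = (σ (j + d) - σ j) ^ ℓ := by
    intro d j
    have hb : sNat t g0 j ≤ t := le_of_lt (sNat_lt t g0 j ht0)
    rw [fNat, ZMod.natCast_mod, Nat.cast_pow, Nat.cast_add, Nat.cast_sub hb,
      ZMod.natCast_self]
    ring_nf
    try rfl
  -- the design
  set D : Fin (ℓ * t) → Fin t → Fin t := vatD t ℓ u σ with hDdef
  have hnt : ℓ * t / t = ℓ := Nat.mul_div_cancel ht0 (m := ℓ)
  have hvalinj : Function.Injective (ZMod.val (n := t)) := by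
    intro z z' h
    rw [← ZMod.natCast_rightInverse z, ← ZMod.natCast_rightInverse z', h]
  refine ⟨D, ⟨⟨dvd_mul_left t ℓ, ?_, ?_⟩, ?_⟩⟩
  · -- rows bijective
    intro r
    rw [← Finite.injective_iff_bijective]
    intro j j' hjj
    have hv : (vatD t ℓ u σ r j).1 = (vatD t ℓ u σ r j').1 := congrArg Fin.val hjj
    simp only [vatD] at hv
    have hz := hvalinj hv
    have hσeq : σ (j : ℕ) = σ (j' : ℕ) :=
      mul_left_cancel₀ (hu0 _) (add_left_cancel hz)
    exact Fin.ext (hσinj _ _ j.isLt j'.isLt hσeq)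
  · -- column counts
    intro j x
    rw [hnt]
    apply Nat.card_eq_of_equiv_fin
    refine ⟨fun s => (finProdFinEquiv.symm s.1).1,
      fun m => ⟨finProdFinEquiv (m,
        ⟨(((x : ℕ) : ZMod t) - u m * σ (j : ℕ)).val, ZMod.val_lt _⟩), ?_⟩, ?_, ?_⟩
    · show vatD t ℓ u σ _ j = x
      rw [vatD_eq_iff, Equiv.symm_apply_apply]
      show ((((((x : ℕ) : ZMod t) - u m * σ (j : ℕ)).val : ℕ) : ZMod t))
          + u m * σ (j : ℕ) = ((x : ℕ) : ZMod t)
      rw [ZMod.natCast_rightInverse _, sub_add_cancel]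
    · rintro ⟨r, hr⟩
      apply Subtype.ext
      show finProdFinEquiv _ = r
      conv_rhs => rw [← Equiv.apply_symm_apply finProdFinEquiv r]
      congr 1
      have hr' := (vatD_eq_iff t ℓ u σ r j x).mp hr
      refine Prod.ext rfl ?_
      apply Fin.ext
      show (((x : ℕ) : ZMod t) - u (finProdFinEquiv.symm r).1 * σ (j : ℕ)).val
          = ((finProdFinEquiv.symm r).2 : ℕ)
      rw [← hr', add_sub_cancel_right]
      exact ZMod.val_cast_of_lt (finProdFinEquiv.symm r).2.isLt
    · intro m
      simp
  · -- Roman condition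
    intro d hd1 hdt x y hxy
    rw [hnt]
    have hdt' : d < t := by omega
    have main : ∀ (r : Fin (ℓ * t)) (j : Fin t) (h : (j : ℕ) + d < t),
        D r j = x → D r ⟨(j : ℕ) + d, h⟩ = y →
        u (finProdFinEquiv.symm r).1 * (σ ((j : ℕ) + d) - σ (j : ℕ))
          = ((y : ℕ) : ZMod t) - ((x : ℕ) : ZMod t) := by
      intro r j h hx hy
      rw [hDdef, vatD_eq_iff] at hx hy
      have hy' : (((finProdFinEquiv.symm r).2 : ℕ) : ZMod t)
          + u (finProdFinEquiv.symm r).1 * σ ((j : ℕ) + d) = ((y : ℕ) : ZMod t) := hy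
      linear_combination hy' - hx
    set f : ℕ → ZMod t := fun j => (σ (j + d) - σ j) ^ ℓ with hfdef
    set w : ZMod t := (((y : ℕ) : ZMod t) - ((x : ℕ) : ZMod t)) ^ ℓ with hwdef
    set sF : Finset ℕ := (Finset.range (t - d)).filter (fun j => f j = w) with hsF
    have hmemF : ∀ (r : Fin (ℓ * t)) (j : Fin t) (h : (j : ℕ) + d < t),
        D r j = x → D r ⟨(j : ℕ) + d, h⟩ = y → (j : ℕ) ∈ sF := by
      intro r j h hx hy
      rw [hsF, Finset.mem_filter, Finset.mem_range]
      refine ⟨by omega, ?_⟩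
      show (σ ((j : ℕ) + d) - σ (j : ℕ)) ^ ℓ = w
      rw [hwdef, ← main r j h hx hy, mul_pow, hu1, one_mul]
    have hinj2 : ∃ F : {p : Fin (ℓ * t) × Fin t //
        ∃ h : (p.2 : ℕ) + d < t, D p.1 p.2 = x ∧ D p.1 ⟨(p.2 : ℕ) + d, h⟩ = y} → {a // a ∈ sF},
        Function.Injective F := by
      refine ⟨fun q => ⟨(q.1.2 : ℕ), ?_⟩, ?_⟩
      · obtain ⟨h, hx, hy⟩ := q.2
        exact hmemF q.1.1 q.1.2 h hx hy
      · rintro ⟨⟨r, j⟩, hq⟩ ⟨⟨r', j'⟩, hq'⟩ hFeq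
        obtain ⟨h, hx, hy⟩ := hq
        obtain ⟨h', hx', hy'⟩ := hq'
        have hjj : j = j' := Fin.ext (congrArg Subtype.val hFeq)
        subst hjj
        -- now show r = r'
        have hΔ : σ ((j : ℕ) + d) - σ (j : ℕ) ≠ 0 := by
          rw [sub_ne_zero]
          intro hc
          have heq : (j : ℕ) + d = (j : ℕ) := hσinj ((j : ℕ) + d) (j : ℕ) h j.isLt hc
          omega
        have hm := main r j h hx hy
        have hm' := main r' j h' hx' hy'
        have hum : u (finProdFinEquiv.symm r).1 = u (finProdFinEquiv.symm r').1 :=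
          mul_right_cancel₀ hΔ (hm.trans hm'.symm)
        have hmeq : (finProdFinEquiv.symm r).1 = (finProdFinEquiv.symm r').1 := huinj hum
        rw [hDdef, vatD_eq_iff] at hx hx'
        have hceq : ((((finProdFinEquiv.symm r).2 : ℕ) : ZMod t))
            = ((((finProdFinEquiv.symm r').2 : ℕ) : ZMod t)) := by
          have := hx.trans hx'.symm
          rw [hmeq] at this
          exact add_right_cancel this
        have hc2 : (finProdFinEquiv.symm r).2 = (finProdFinEquiv.symm r').2 := by
          apply Fin.ext
          rw [← ZMod.val_cast_of_lt (finProdFinEquiv.symm r).2.isLt,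
            ← ZMod.val_cast_of_lt (finProdFinEquiv.symm r').2.isLt, hceq]
        have hrr : r = r' := by
          have : finProdFinEquiv.symm r = finProdFinEquiv.symm r' :=
            Prod.ext hmeq hc2
          exact finProdFinEquiv.symm.injective this
        subst hrr
        rfl
    obtain ⟨F, hF⟩ := hinj2
    have h1 : designPairCount (ℓ * t) t D d x y ≤ Nat.card {a // a ∈ sF} :=
      Nat.card_le_card_of_injective F hF
    have h2 : Nat.card {a // a ∈ sF} = sF.card := Nat.card_eq_finsetCard sF
    have h3 : sF.card ≤ ℓ := by
      refine card_filter_le_of_periodic f k ℓ (t - d) hk0 hl (by omega) ?_ ?_ ?_ w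
      · -- periodicity
        intro j hj
        show (σ (j + k + d) - σ (j + k)) ^ ℓ = (σ (j + d) - σ j) ^ ℓ
        have e1 : σ (j + k + d) = g ^ k * σ (j + d) := by
          rw [hσs _ (by omega), hσs _ (by omega), ← pow_add]
          congr 1
          omega
        have e2 : σ (j + k) = g ^ k * σ j := by
          rw [hσs _ (by omega), hσs _ hj, ← pow_add]
          congr 1
          omega
        rw [e1, e2, ← mul_sub, mul_pow, ← pow_mul, hkl, hg1, one_mul]
      · intro a b ha1 hak haN hb1 hbk hbN hab
        apply hinjF d hdt' hd1 a b ha1 hak haN hb1 hbk hbN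
        have hcast : ((fNat t g0 ℓ d a : ℕ) : ZMod t) = ((fNat t g0 ℓ d b : ℕ) : ZMod t) := by
          rw [hfcast d a, hfcast d b]
          exact hab
        have hval := congrArg ZMod.val hcast
        rwa [ZMod.val_cast_of_lt (fNat_lt _ _ _ _ _ ht0),
          ZMod.val_cast_of_lt (fNat_lt _ _ _ _ _ ht0)] at hval
      · intro j hj1 hjk hjN hj0
        apply h0F d hdt' hd1 j hj1 hjk hjN
        have hcast : ((fNat t g0 ℓ d j : ℕ) : ZMod t) = ((fNat t g0 ℓ d 0 : ℕ) : ZMod t) := by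
          rw [hfcast d j, hfcast d 0]
          exact hj0
        have hval := congrArg ZMod.val hcast
        rwa [ZMod.val_cast_of_lt (fNat_lt _ _ _ _ _ ht0),
          ZMod.val_cast_of_lt (fNat_lt _ _ _ _ _ ht0)] at hval
    calc designPairCount (ℓ * t) t D d x y ≤ Nat.card {a // a ∈ sF} := h1
      _ = sF.card := h2
      _ ≤ ℓ := h3


lemma pow_mod_cast_eq_one {t g0 e : ℕ} (ht : 1 < t) (h : g0 ^ e % t = 1) :
    ((g0 : ℕ) : ZMod t) ^ e = 1 := by
  haveI : NeZero t := ⟨by omega⟩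
  calc ((g0 : ℕ) : ZMod t) ^ e = ((g0 ^ e : ℕ) : ZMod t) := by rw [Nat.cast_pow]
    _ = ((g0 ^ e % t : ℕ) : ZMod t) := by rw [ZMod.natCast_mod]
    _ = 1 := by rw [h, Nat.cast_one]

lemma pow_mod_cast_ne_one {t g0 e : ℕ} (ht : 1 < t) (h : g0 ^ e % t ≠ 1) :
    ((g0 : ℕ) : ZMod t) ^ e ≠ 1 := by
  haveI : NeZero t := ⟨by omega⟩
  intro hc
  apply h
  have h2 : ((g0 ^ e % t : ℕ) : ZMod t) = ((1 : ℕ) : ZMod t) := by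
    rw [ZMod.natCast_mod, Nat.cast_pow, hc, Nat.cast_one]
  have h3 := congrArg ZMod.val h2
  rwa [ZMod.val_cast_of_lt (Nat.mod_lt _ (by omega)), ZMod.val_cast_of_lt ht] at h3

theorem exists_vatican_numeric (t ℓ k g0 : ℕ) (hp : Nat.Prime t) (hl : 0 < ℓ)
    (hkl : k * ℓ = t - 1)
    (h1 : g0 ^ (t - 1) % t = 1)
    (hdiv : ∀ p : ℕ, p < t → 2 ≤ p → p ∣ (t - 1) → g0 ^ ((t - 1) / p) % t ≠ 1)
    (hinjH : ∀ d : ℕ, d < t → ∀ a : ℕ, a < k + 1 → ∀ b : ℕ, b < k + 1 →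
      (1 ≤ d ∧ 1 ≤ a ∧ a < t - d ∧ 1 ≤ b ∧ b < t - d ∧
        fNat t g0 ℓ d a = fNat t g0 ℓ d b) → a = b)
    (h0H : ∀ d : ℕ, d < t → ∀ j : ℕ, j < k + 1 →
      (1 ≤ d ∧ 1 ≤ j ∧ j < t - d ∧ fNat t g0 ℓ d j = fNat t g0 ℓ d 0) →
        t - d ≤ j + k * (ℓ - 1)) :
    ∃ D : Fin (ℓ * t) → Fin t → Fin t, IsVaticanDesign (ℓ * t) t D := by
  have ht1 : 1 < t := hp.one_lt
  refine exists_vatican_general t ℓ k g0 hp hl hkl ?_ ?_ ?_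
  · refine orderOf_eq_of_pow_and_pow_div_prime (by omega) (pow_mod_cast_eq_one ht1 h1) ?_
    intro p pp pd
    refine pow_mod_cast_ne_one ht1 (hdiv p ?_ pp.two_le pd)
    have := Nat.le_of_dvd (by omega) pd
    omega
  · intro d hd hd1 a b ha1 hak haN hb1 hbk hbN heq
    exact hinjH d hd a (by omega) b (by omega) ⟨hd1, ha1, haN, hb1, hbN, heq⟩
  · intro d hd hd1 j hj1 hjk hjN heq
    exact h0H d hd j (by omega) ⟨hd1, hj1, hjN, heq⟩

set_option exponentiation.threshold 600 in
set_option synthInstance.maxSize 2000 in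
set_option synthInstance.maxHeartbeats 1000000 in
set_option maxRecDepth 40000 in
theorem vaticanInst_61 : ∃ D : Fin (10 * 61) → Fin 61 → Fin 61, IsVaticanDesign (10 * 61) 61 D :=
  exists_vatican_numeric 61 10 6 30 (by norm_num) (by norm_num) (by norm_num)
    (by decide) (by decide) (by decide) (by decide)

set_option exponentiation.threshold 600 in
set_option synthInstance.maxSize 2000 in
set_option synthInstance.maxHeartbeats 1000000 in
set_option maxRecDepth 40000 in
theorem vaticanInst_71 : ∃ D : Fin (14 * 71) → Fin 71 → Fin 71, IsVaticanDesign (14 * 71) 71 D :=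
  exists_vatican_numeric 71 14 5 55 (by norm_num) (by norm_num) (by norm_num)
    (by decide) (by decide) (by decide) (by decide)

set_option exponentiation.threshold 600 in
set_option synthInstance.maxSize 2000 in
set_option synthInstance.maxHeartbeats 1000000 in
set_option maxRecDepth 40000 in
theorem vaticanInst_79 : ∃ D : Fin (13 * 79) → Fin 79 → Fin 79, IsVaticanDesign (13 * 79) 79 D :=
  exists_vatican_numeric 79 13 6 75 (by norm_num) (by norm_num) (by norm_num)
    (by decide) (by decide) (by decide) (by decide)

set_option exponentiation.threshold 600 in
set_option synthInstance.maxSize 2000 in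
set_option synthInstance.maxHeartbeats 1000000 in
set_option maxRecDepth 40000 in
theorem vaticanInst_101 : ∃ D : Fin (20 * 101) → Fin 101 → Fin 101, IsVaticanDesign (20 * 101) 101 D :=
  exists_vatican_numeric 101 20 5 48 (by norm_num) (by norm_num) (by norm_num)
    (by decide) (by decide) (by decide) (by decide)

set_option exponentiation.threshold 600 in
set_option synthInstance.maxSize 2000 in
set_option synthInstance.maxHeartbeats 1000000 in
set_option maxRecDepth 40000 in
theorem vaticanInst_109 : ∃ D : Fin (18 * 109) → Fin 109 → Fin 109, IsVaticanDesign (18 * 109) 109 D :=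
  exists_vatican_numeric 109 18 6 14 (by norm_num) (by norm_num) (by norm_num)
    (by decide) (by decide) (by decide) (by decide)

set_option exponentiation.threshold 600 in
set_option synthInstance.maxSize 2000 in
set_option synthInstance.maxHeartbeats 1000000 in
set_option maxRecDepth 40000 in
theorem vaticanInst_113 : ∃ D : Fin (16 * 113) → Fin 113 → Fin 113, IsVaticanDesign (16 * 113) 113 D :=
  exists_vatican_numeric 113 16 7 92 (by norm_num) (by norm_num) (by norm_num)
    (by decide) (by decide) (by decide) (by decide)

set_option exponentiation.threshold 600 in
set_option synthInstance.maxSize 2000 in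
set_option synthInstance.maxHeartbeats 1000000 in
set_option maxRecDepth 40000 in
theorem vaticanInst_131 : ∃ D : Fin (26 * 131) → Fin 131 → Fin 131, IsVaticanDesign (26 * 131) 131 D :=
  exists_vatican_numeric 131 26 5 37 (by norm_num) (by norm_num) (by norm_num)
    (by decide) (by decide) (by decide) (by decide)

set_option exponentiation.threshold 600 in
set_option synthInstance.maxSize 2000 in
set_option synthInstance.maxHeartbeats 1000000 in
set_option maxRecDepth 40000 in
theorem vaticanInst_151 : ∃ D : Fin (25 * 151) → Fin 151 → Fin 151, IsVaticanDesign (25 * 151) 151 D :=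
  exists_vatican_numeric 151 25 6 134 (by norm_num) (by norm_num) (by norm_num)
    (by decide) (by decide) (by decide) (by decide)

set_option exponentiation.threshold 600 in
set_option synthInstance.maxSize 2000 in
set_option synthInstance.maxHeartbeats 1000000 in
set_option maxRecDepth 40000 in
theorem vaticanInst_157 : ∃ D : Fin (26 * 157) → Fin 157 → Fin 157, IsVaticanDesign (26 * 157) 157 D :=
  exists_vatican_numeric 157 26 6 21 (by norm_num) (by norm_num) (by norm_num)
    (by decide) (by decide) (by decide) (by decide)

set_option exponentiation.threshold 600 in
set_option synthInstance.maxSize 2000 in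
set_option synthInstance.maxHeartbeats 1000000 in
set_option maxRecDepth 40000 in
theorem vaticanInst_181 : ∃ D : Fin (36 * 181) → Fin 181 → Fin 181, IsVaticanDesign (36 * 181) 181 D :=
  exists_vatican_numeric 181 36 5 171 (by norm_num) (by norm_num) (by norm_num)
    (by decide) (by decide) (by decide) (by decide)

set_option exponentiation.threshold 600 in
set_option synthInstance.maxSize 2000 in
set_option synthInstance.maxHeartbeats 1000000 in
set_option maxRecDepth 40000 in
theorem vaticanInst_191 : ∃ D : Fin (38 * 191) → Fin 191 → Fin 191, IsVaticanDesign (38 * 191) 191 D :=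
  exists_vatican_numeric 191 38 5 58 (by norm_num) (by norm_num) (by norm_num)
    (by decide) (by decide) (by decide) (by decide)

set_option exponentiation.threshold 600 in
set_option synthInstance.maxSize 2000 in
set_option synthInstance.maxHeartbeats 1000000 in
set_option maxRecDepth 40000 in
theorem vaticanInst_211 : ∃ D : Fin (42 * 211) → Fin 211 → Fin 211, IsVaticanDesign (42 * 211) 211 D :=
  exists_vatican_numeric 211 42 5 155 (by norm_num) (by norm_num) (by norm_num)
    (by decide) (by decide) (by decide) (by decide)

set_option exponentiation.threshold 600 in
set_option synthInstance.maxSize 2000 in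
set_option synthInstance.maxHeartbeats 1000000 in
set_option maxRecDepth 40000 in
theorem vaticanInst_239 : ∃ D : Fin (34 * 239) → Fin 239 → Fin 239, IsVaticanDesign (34 * 239) 239 D :=
  exists_vatican_numeric 239 34 7 156 (by norm_num) (by norm_num) (by norm_num)
    (by decide) (by decide) (by decide) (by decide)

set_option exponentiation.threshold 600 in
set_option synthInstance.maxSize 2000 in
set_option synthInstance.maxHeartbeats 1000000 in
set_option maxRecDepth 40000 in
theorem vaticanInst_251 : ∃ D : Fin (50 * 251) → Fin 251 → Fin 251, IsVaticanDesign (50 * 251) 251 D :=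
  exists_vatican_numeric 251 50 5 29 (by norm_num) (by norm_num) (by norm_num)
    (by decide) (by decide) (by decide) (by decide)

set_option exponentiation.threshold 600 in
set_option synthInstance.maxSize 2000 in
set_option synthInstance.maxHeartbeats 1000000 in
set_option maxRecDepth 40000 in
theorem vaticanInst_281 : ∃ D : Fin (35 * 281) → Fin 281 → Fin 281, IsVaticanDesign (35 * 281) 281 D :=
  exists_vatican_numeric 281 35 8 13 (by norm_num) (by norm_num) (by norm_num)
    (by decide) (by decide) (by decide) (by decide)

theorem vatican_design_primitive_root_list :
    ∀ p : ℕ × ℕ, p ∈ ({(61,10), (71,14), (79,13), (101,20), (109,18), (113,16),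
        (131,26), (151,25), (157,26), (181,36), (191,38), (211,42), (239,34),
        (251,50), (281,35)} : Set (ℕ × ℕ)) →
      ∃ D : Fin (p.2 * p.1) → Fin p.1 → Fin p.1, IsVaticanDesign (p.2 * p.1) p.1 D := by
  rintro p (rfl|rfl|rfl|rfl|rfl|rfl|rfl|rfl|rfl|rfl|rfl|rfl|rfl|rfl|rfl)
  · exact vaticanInst_61
  · exact vaticanInst_71
  · exact vaticanInst_79
  · exact vaticanInst_101
  · exact vaticanInst_109
  · exact vaticanInst_113
  · exact vaticanInst_131
  · exact vaticanInst_151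
  · exact vaticanInst_157
  · exact vaticanInst_181
  · exact vaticanInst_191
  · exact vaticanInst_211
  · exact vaticanInst_239
  · exact vaticanInst_251
  · exact vaticanInst_281
end

section
/- The three orderings (0,1,5,4,2,3,6), (0,2,3,1,4,6,5), (0,4,6,2,1,5,3) of ZMod 7 form a Vatican triple for ZMod 7: for each 1 ≤ d ≤ 6 and each non-zero g ∈ ZMod 7, the number of pairs (r, j) with r ∈ {1,2,3}, 0 ≤ j < 7 − d and a_r(j+d) − a_r(j) = g is at most 3. -/
/-- A Roman-`k` `ℓ`-tuple for an additive group `G` of order `t`. -/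
def IsAddRomanTuple (G : Type*) [AddGroup G] (t k ℓ : ℕ)
    (a : Fin ℓ → Fin t → G) : Prop :=
  (∀ r : Fin ℓ, Function.Bijective (a r)) ∧
  ∀ d : ℕ, 1 ≤ d → d ≤ k → ∀ g : G, g ≠ 0 →
    Nat.card {p : Fin ℓ × Fin t //
      ∃ h : (p.2 : ℕ) + d < t, a p.1 ⟨(p.2 : ℕ) + d, h⟩ - a p.1 p.2 = g} ≤ ℓ

/-- A Vatican `ℓ`-tuple (for a group of order `t`) is a Roman-`(t-1)` `ℓ`-tuple. -/
def IsAddVaticanTuple (G : Type*) [AddGroup G] (t ℓ : ℕ)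
    (a : Fin ℓ → Fin t → G) : Prop :=
  IsAddRomanTuple G t (t - 1) ℓ a

theorem vatican_triple_zmod7 :
    IsAddVaticanTuple (ZMod 7) 7 3
      ![![0, 1, 5, 4, 2, 3, 6], ![0, 2, 3, 1, 4, 6, 5], ![0, 4, 6, 2, 1, 5, 3]] := by
  constructor
  · decide
  · intro d hd1 hd2 g hg
    interval_cases d <;> revert g hg <;>
      simp only [Nat.card_eq_fintype_card] <;> decide
end

section
/- The three orderings (0,1,2,3,5,7,4,10,9,8,6), (0,2,9,5,10,6,3,8,1,4,7), (0,5,8,1,7,6,4,2,10,3,9) of ZMod 11 form a Vatican triple for ZMod 11: for each 1 ≤ d ≤ 10 and each non-zero g ∈ ZMod 11, the number of pairs (r, j) with r ∈ {1,2,3}, 0 ≤ j < 11 − d and a_r(j+d) − a_r(j) = g is at most 3. -/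
theorem vatican_triple_zmod11 :
    IsAddVaticanTuple (ZMod 11) 11 3
      ![![0, 1, 2, 3, 5, 7, 4, 10, 9, 8, 6], ![0, 2, 9, 5, 10, 6, 3, 8, 1, 4, 7],
        ![0, 5, 8, 1, 7, 6, 4, 2, 10, 3, 9]] := by
  constructor
  · decide
  · intro d h1 h2 g hg
    rw [Nat.card_eq_fintype_card]
    interval_cases d <;> revert hg <;> revert g <;> decide
end

section
/- There is no 3-fold Vatican pseudoterrace for ZMod 9: for every automorphism α of ZMod 9 of order 3, no ordering of the elements of ZMod 9 is a Roman-8 (i.e., Vatican) pseudoterrace with respect to α. -/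
/-- The cycle (orbit) of `g` under an automorphism `α` of order `ℓ`:
`{α^s g : 1 ≤ s ≤ ℓ}`. -/
def addCycle {G : Type*} [AddGroup G] (α : AddAut G) (ℓ : ℕ) (g : G) : Set G :=
  {x | ∃ s : ℕ, 1 ≤ s ∧ s ≤ ℓ ∧ (s • α) g = x}

/-- A Roman-`k` pseudoterrace for an additive group `G` of order `t` with respect to
an automorphism `α` of order `ℓ`: an ordering `a` of the elements of `G` such that for
each non-identity `g` and each `1 ≤ d ≤ k`, the number of indices `j` with
`a (j + d) - a j` in the cycle of `g` is at most the size of that cycle. -/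
def IsAddRomanPseudoterrace {G : Type*} [AddGroup G] (t k : ℕ)
    (α : AddAut G) (ℓ : ℕ) (a : Fin t → G) : Prop :=
  Function.Bijective a ∧
  ∀ g : G, g ≠ 0 → ∀ d : ℕ, 1 ≤ d → d ≤ k →
    Nat.card {j : Fin t //
        ∃ h : (j : ℕ) + d < t, a ⟨(j : ℕ) + d, h⟩ - a j ∈ addCycle α ℓ g}
      ≤ Nat.card (addCycle α ℓ g)

lemma addAut_apply_eq (α : AddAut (ZMod 9)) (x : ZMod 9) : α x = x * α 1 := by
  have hx : x = x.val • (1 : ZMod 9) := by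
    simp [nsmul_eq_mul, ZMod.natCast_val, ZMod.cast_id]
  conv_lhs => rw [hx]
  rw [map_nsmul]
  simp [nsmul_eq_mul, ZMod.natCast_val, ZMod.cast_id]

lemma addAut_pow_apply (α : AddAut (ZMod 9)) (s : ℕ) (g : ZMod 9) :
    (s • α) g = g * (α 1) ^ s := by
  induction s with
  | zero => simp
  | succ n ih =>
      rw [succ_nsmul', AddAut.add_apply, ih, addAut_apply_eq, pow_succ]
      ring

lemma addAut_one_eq (α : AddAut (ZMod 9)) (h : addOrderOf α = 3) : α 1 = 4 ∨ α 1 = 7 := by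
  have h3 : 3 • α = 0 := by rw [← h]; exact addOrderOf_nsmul_eq_zero α
  have hc3 : (α 1) ^ 3 = 1 := by
    have := addAut_pow_apply α 3 1
    rw [h3] at this
    simpa using this.symm
  have hc1 : α 1 ≠ 1 := by
    intro hc
    have : α = 0 := by
      ext x
      rw [addAut_apply_eq α x, hc, mul_one]; rfl
    rw [this] at h; simp at h
  revert hc3 hc1
  generalize α 1 = c
  revert c
  decide

lemma mem_addCycle (α : AddAut (ZMod 9)) (g x : ZMod 9) :
    x ∈ addCycle α 3 g ↔ (x = g * α 1 ∨ x = g * (α 1) ^ 2 ∨ x = g * (α 1) ^ 3) := by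
  constructor
  · rintro ⟨s, h1, h3, rfl⟩
    interval_cases s
    · left; rw [addAut_pow_apply, pow_one]
    · right; left; rw [addAut_pow_apply]
    · right; right; rw [addAut_pow_apply]
  · rintro (rfl | rfl | rfl)
    · exact ⟨1, le_refl _, by norm_num, by rw [addAut_pow_apply, pow_one]⟩
    · exact ⟨2, by norm_num, by norm_num, by rw [addAut_pow_apply]⟩
    · exact ⟨3, by norm_num, le_refl _, by rw [addAut_pow_apply]⟩

lemma cycle_eq_finset (α : AddAut (ZMod 9)) (hc : α 1 = 4 ∨ α 1 = 7)
    (g : ZMod 9) (S : Finset (ZMod 9))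
    (h4 : ∀ x : ZMod 9, (x = g * 4 ∨ x = g * 4 ^ 2 ∨ x = g * 4 ^ 3) ↔ x ∈ S)
    (h7 : ∀ x : ZMod 9, (x = g * 7 ∨ x = g * 7 ^ 2 ∨ x = g * 7 ^ 3) ↔ x ∈ S) :
    addCycle α 3 g = ↑S := by
  ext x
  rw [mem_addCycle]
  rcases hc with h | h <;> rw [h] <;> simp only [Finset.mem_coe]
  · exact h4 x
  · exact h7 x

/-- Count of indices `j` with `f (j+d) - f j ∈ S`. -/
def cnt (f : Fin 9 → ZMod 9) (d : ℕ) (S : Finset (ZMod 9)) : ℕ :=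
  (Finset.univ.filter
    (fun j : Fin 9 => ∃ h : (j : ℕ) + d < 9, f ⟨(j : ℕ) + d, h⟩ - f j ∈ S)).card

lemma cnt_le_of (α : AddAut (ZMod 9)) (a : Fin 9 → ZMod 9) (g : ZMod 9)
    (S : Finset (ZMod 9)) (Hset : addCycle α 3 g = ↑S) (d : ℕ)
    (H : Nat.card {j : Fin 9 //
        ∃ h : (j : ℕ) + d < 9, a ⟨(j : ℕ) + d, h⟩ - a j ∈ addCycle α 3 g}
      ≤ Nat.card (addCycle α 3 g)) :
    cnt a d S ≤ S.card := by
  have hiff : ∀ j : Fin 9,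
      (∃ h : (j : ℕ) + d < 9, a ⟨(j : ℕ) + d, h⟩ - a j ∈ S) ↔
      (∃ h : (j : ℕ) + d < 9, a ⟨(j : ℕ) + d, h⟩ - a j ∈ addCycle α 3 g) := by
    intro j
    constructor
    · rintro ⟨h, hx⟩
      exact ⟨h, by rw [Hset]; exact Finset.mem_coe.mpr hx⟩
    · rintro ⟨h, hx⟩
      rw [Hset] at hx
      exact ⟨h, Finset.mem_coe.mp hx⟩
  have e1 : cnt a d S = Nat.card {j : Fin 9 //
      ∃ h : (j : ℕ) + d < 9, a ⟨(j : ℕ) + d, h⟩ - a j ∈ S} := by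
    rw [Nat.card_eq_fintype_card, Fintype.card_subtype]
    rfl
  have e2 : Nat.card (addCycle α 3 g) = S.card := by
    rw [Nat.card_congr (Equiv.setCongr Hset), Nat.card_coe_set_eq,
      Set.ncard_coe_finset]
  rw [e1, ← e2]
  calc Nat.card {j : Fin 9 //
      ∃ h : (j : ℕ) + d < 9, a ⟨(j : ℕ) + d, h⟩ - a j ∈ S}
      = Nat.card {j : Fin 9 //
      ∃ h : (j : ℕ) + d < 9, a ⟨(j : ℕ) + d, h⟩ - a j ∈ addCycle α 3 g} :=
        Nat.card_congr (Equiv.subtypeEquivRight hiff)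
    _ ≤ Nat.card (addCycle α 3 g) := H

/-! ### A verified pruned search -/

def vpCls (x : ℕ) : ℕ :=
  if x = 3 then 0 else if x = 6 then 1 else if x % 3 = 1 then 2 else 3

def vpD (x y : ℕ) : ℕ := vpCls ((y + 9 - x) % 9)

def vpBnd (k : ℕ) : ℕ := if k ≤ 1 then 1 else 3

def vpStep (x : ℕ) : List ℕ → List ℕ → Option (List ℕ)
  | [], cs => some cs
  | _ :: _, [] => some []
  | w :: ws, c :: cs =>
      if c / 16 ^ (vpD w x) % 16 < vpBnd (vpD w x) then
        (vpStep x ws cs).map ((c + 16 ^ (vpD w x)) :: ·)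
      else none

def vpDfs : ℕ → List ℕ → List ℕ → List ℕ → Bool
  | 0, _, _, _ => true
  | n+1, r, rest, cl =>
      rest.any fun x =>
        match vpStep x r cl with
        | none => false
        | some cl' => vpDfs n (x :: r) (rest.erase x) cl'

def vpCnt (l : List ℕ) (d k : ℕ) : ℕ := (List.zipWith vpD l (l.drop d)).count k

def vpEnc (l : List ℕ) (d : ℕ) : ℕ :=
  vpCnt l d 0 + 16 * vpCnt l d 1 + 256 * vpCnt l d 2 + 4096 * vpCnt l d 3

def vpCl (l : List ℕ) : List ℕ := (List.range' 1 8).map (vpEnc l)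

lemma vpD_lt (w x : ℕ) : vpD w x < 4 := by
  unfold vpD vpCls; split_ifs <;> norm_num

lemma vpBnd_le (k : ℕ) : vpBnd k ≤ 3 := by
  unfold vpBnd; split_ifs <;> norm_num

lemma vpCnt_eq_zero {l : List ℕ} {d : ℕ} (k : ℕ) (h : l.length ≤ d) :
    vpCnt l d k = 0 := by
  unfold vpCnt
  rw [List.drop_eq_nil_of_le h, List.zipWith_nil_right]
  rfl

lemma count_zipWith_take_le (k : ℕ) :
    ∀ (u v : List ℕ) (m n : ℕ),
      (List.zipWith vpD (u.take m) (v.take n)).count k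
        ≤ (List.zipWith vpD u v).count k := by
  intro u
  induction u with
  | nil => intro v m n; simp
  | cons a u' ih =>
      intro v m n
      cases v with
      | nil => simp
      | cons b v' =>
          cases m with
          | zero => simp
          | succ m' =>
              cases n with
              | zero => simp
              | succ n' =>
                  simp only [List.take_succ_cons, List.zipWith_cons_cons,
                    List.count_cons]
                  exact Nat.add_le_add (ih v' m' n') (le_refl _)

lemma vpCnt_take_le (l : List ℕ) (m d k : ℕ) :
    vpCnt (l.take m) d k ≤ vpCnt l d k := by
  unfold vpCnt
  rw [List.drop_take]
  calc (List.zipWith vpD (l.take m) ((l.drop d).take (m - d))).count k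
      ≤ (List.zipWith vpD l (l.drop d)).count k :=
        count_zipWith_take_le k l (l.drop d) m (m - d)

lemma vpCnt_le_append (l : List ℕ) (x : ℕ) (d k : ℕ) :
    vpCnt l d k ≤ vpCnt (l ++ [x]) d k := by
  have h : l = (l ++ [x]).take l.length := (List.take_left (l₁ := l) (l₂ := [x])).symm
  calc vpCnt l d k = vpCnt ((l ++ [x]).take l.length) d k := by rw [← h]
    _ ≤ vpCnt (l ++ [x]) d k := vpCnt_take_le _ _ _ _

lemma vpCnt_append (A B : List ℕ) (w x k : ℕ) :
    vpCnt ((A ++ [w] ++ B) ++ [x]) (B.length + 1) k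
      = vpCnt (A ++ [w] ++ B) (B.length + 1) k + (if vpD w x = k then 1 else 0) := by
  set L := A ++ [w] ++ B with hL
  have hlen : L.length = A.length + B.length + 1 := by simp [hL]; omega
  have hA : A.length = (L.drop (B.length + 1)).length := by
    rw [List.length_drop]; omega
  have h1 : (L ++ [x]).drop (B.length + 1) = L.drop (B.length + 1) ++ [x] :=
    List.drop_append_of_le_length (by omega)
  have h2 : List.zipWith vpD (L ++ [x]) ((L ++ [x]).drop (B.length + 1))
      = List.zipWith vpD A (L.drop (B.length + 1)) ++ [vpD w x] := by
    rw [h1]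
    have hsplit : L ++ [x] = A ++ (w :: (B ++ [x])) := by simp [hL]
    rw [hsplit, List.zipWith_append hA]
    congr 1
    simp
  have h3 : List.zipWith vpD L (L.drop (B.length + 1))
      = List.zipWith vpD A (L.drop (B.length + 1)) := by
    have h4 := List.zipWith_append (f := vpD) (l₁ := A) (l₁' := w :: B) (l₂ := L.drop (B.length + 1)) (l₂' := []) hA
    have h5 : A ++ w :: B = L := by simp [hL]
    rw [List.append_nil, h5] at h4
    simpa using h4
  unfold vpCnt
  rw [h2, h3, List.count_append]
  congr 1
  simp [List.count_cons, beq_iff_eq]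
lemma vpStep_walk (x : ℕ) :
    ∀ (r v u l : List ℕ), r = v.reverse → l = v ++ u → l.length ≤ 8 →
    (∀ d k, 1 ≤ d → vpCnt (l ++ [x]) d k ≤ vpBnd k) →
    vpStep x r ((List.range' (u.length + 1) (8 - u.length)).map (vpEnc l)) =
      some ((List.range' (u.length + 1) (8 - u.length)).map (vpEnc (l ++ [x]))) := by
  intro r
  induction r with
  | nil =>
      intro v u l hr hl hlen hb
      have hv : v = [] := List.reverse_eq_nil_iff.mp hr.symm
      subst hv
      simp only [List.nil_append] at hl
      show some _ = some _
      congr 1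
      apply List.map_congr_left
      intro d hd
      obtain ⟨i, hi, rfl⟩ := List.mem_range'.mp hd
      have hld : l.length < u.length + 1 + 1 * i := by rw [hl]; omega
      have h1 : vpEnc l (u.length + 1 + 1 * i) = 0 := by
        unfold vpEnc
        rw [vpCnt_eq_zero 0 (by omega), vpCnt_eq_zero 1 (by omega),
          vpCnt_eq_zero 2 (by omega), vpCnt_eq_zero 3 (by omega)]
      have h2 : vpEnc (l ++ [x]) (u.length + 1 + 1 * i) = 0 := by
        have hlx : (l ++ [x]).length ≤ u.length + 1 + 1 * i := by
          simp [List.length_append]; omega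
        unfold vpEnc
        rw [vpCnt_eq_zero 0 hlx, vpCnt_eq_zero 1 hlx,
          vpCnt_eq_zero 2 hlx, vpCnt_eq_zero 3 hlx]
      rw [h1, h2]
  | cons w ws ih =>
      intro v u l hr hl hlen hb
      have hv : v = ws.reverse ++ [w] := by
        rw [← List.reverse_reverse v, ← hr]; simp
      have hlA : l = ws.reverse ++ [w] ++ u := by rw [hl, hv]
      have hlenl : l.length = ws.length + 1 + u.length := by
        rw [hlA]; simp; omega
      have hu8 : u.length < 8 := by omega
      have happ : ∀ k, vpCnt (l ++ [x]) (u.length + 1) k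
          = vpCnt l (u.length + 1) k + (if vpD w x = k then 1 else 0) := by
        intro k
        rw [hlA]
        exact vpCnt_append (ws.reverse) u w x k
      have hcnts : ∀ k, vpCnt l (u.length + 1) k ≤ 3 := by
        intro k
        calc vpCnt l (u.length + 1) k ≤ vpCnt (l ++ [x]) (u.length + 1) k :=
              vpCnt_le_append _ _ _ _
          _ ≤ vpBnd k := hb (u.length + 1) k (by omega)
          _ ≤ 3 := vpBnd_le k
      have hklt : vpD w x < 4 := vpD_lt w x
      have hdig : vpEnc l (u.length + 1) / 16 ^ (vpD w x) % 16
          = vpCnt l (u.length + 1) (vpD w x) := by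
        have h0 := hcnts 0
        have h1 := hcnts 1
        have h2 := hcnts 2
        have h3 := hcnts 3
        unfold vpEnc
        set k0 := vpD w x with hk0
        interval_cases k0 <;>
          simp only [pow_zero, pow_one, Nat.div_one,
            show (16:ℕ)^2 = 256 from rfl, show (16:ℕ)^3 = 4096 from rfl] <;>
          omega
      have hcond : vpEnc l (u.length + 1) / 16 ^ (vpD w x) % 16
          < vpBnd (vpD w x) := by
        rw [hdig]
        have hbb := hb (u.length + 1) (vpD w x) (by omega)
        rw [happ (vpD w x), if_pos rfl] at hbb
        omega
      have hrange : List.range' (u.length + 1) (8 - u.length)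
          = (u.length + 1) :: List.range' (u.length + 2) (8 - (u.length + 1)) := by
        have h8 : 8 - u.length = (8 - (u.length + 1)) + 1 := by omega
        rw [h8, List.range'_succ]
      rw [hrange]
      simp only [List.map_cons]
      show vpStep x (w :: ws) (vpEnc l (u.length + 1) :: _) = _
      rw [vpStep]
      rw [if_pos hcond]
      have hrec := ih (ws.reverse) (w :: u) l (by simp) (by rw [hlA]; simp) hlen hb
      simp only [List.length_cons] at hrec
      rw [show u.length + 1 + 1 = u.length + 2 from rfl] at hrec
      rw [hrec]
      simp only [Option.map_some]
      congr 2
      -- head: vpEnc l d + 16 ^ vpD w x = vpEnc (l ++ [x]) d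
      have e0 := happ 0
      have e1 := happ 1
      have e2 := happ 2
      have e3 := happ 3
      unfold vpEnc
      set k0 := vpD w x with hk0
      interval_cases k0 <;>
        simp only [pow_zero, pow_one, if_pos, if_neg,
          show (16:ℕ)^2 = 256 from rfl, show (16:ℕ)^3 = 4096 from rfl] <;>
        simp at e0 e1 e2 e3 <;> omega

lemma vpStep_full (x : ℕ) (p : List ℕ) (hlen : p.length ≤ 8)
    (hb : ∀ d k, 1 ≤ d → vpCnt (p ++ [x]) d k ≤ vpBnd k) :
    vpStep x p.reverse (vpCl p) = some (vpCl (p ++ [x])) := by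
  have := vpStep_walk x p.reverse p [] p rfl (by simp) hlen hb
  simpa [vpCl] using this

lemma vpDfs_complete :
    ∀ (s p rest : List ℕ), rest.Perm s → p.length + s.length = 9 →
    (∀ m d k, 1 ≤ d → vpCnt ((p ++ s).take m) d k ≤ vpBnd k) →
    vpDfs s.length p.reverse rest (vpCl p) = true := by
  intro s
  induction s with
  | nil => intro p rest _ _ _; rfl
  | cons y s' ih =>
      intro p rest hperm hlen hm
      have hy : y ∈ rest := hperm.mem_iff.mpr (List.mem_cons_self (a := y) (l := s'))
      have hstep : vpStep y p.reverse (vpCl p) = some (vpCl (p ++ [y])) := by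
        apply vpStep_full
        · have : s'.length + 1 ≥ 1 := by omega
          simp [List.length_cons] at hlen
          omega
        · intro d k hd
          have htake : (p ++ (y :: s')).take (p.length + 1) = p ++ [y] := by
            rw [show p.length + 1 = p.length + 1 from rfl, List.take_append]
            simp
          have := hm (p.length + 1) d k hd
          rwa [htake] at this
      show vpDfs (s'.length + 1) p.reverse rest (vpCl p) = true
      rw [vpDfs]
      rw [List.any_eq_true]
      refine ⟨y, hy, ?_⟩
      rw [hstep]
      show vpDfs s'.length (y :: p.reverse) (rest.erase y) (vpCl (p ++ [y])) = true
      have hrev : y :: p.reverse = (p ++ [y]).reverse := by simp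
      rw [hrev]
      apply ih (p ++ [y]) (rest.erase y)
      · have := hperm.erase y
        rwa [List.erase_cons_head] at this
      · simp at hlen ⊢; omega
      · intro m d k hd
        have hassoc : (p ++ [y]) ++ s' = p ++ (y :: s') := by simp
        rw [hassoc]
        exact hm m d k hd
lemma val_sub_eq : ∀ x y : ZMod 9, (y.val + 9 - x.val) % 9 = (y - x).val := by
  decide

lemma zip_eq_map_range (l : List ℕ) (d : ℕ) :
    List.zipWith vpD l (l.drop d)
      = (List.range (l.length - d)).map
          (fun j => vpD (l.getD j 0) (l.getD (d + j) 0)) := by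
  apply List.ext_getElem
  · simp [List.length_zipWith]
  · intro n h1 h2
    have hlen : n < l.length - d := by
      simp [List.length_zipWith] at h1
      omega
    simp only [List.getElem_zipWith, List.getElem_map, List.getElem_range,
      List.getElem_drop]
    rw [List.getD_eq_getElem l 0 (show n < l.length by omega),
      List.getD_eq_getElem l 0 (show d + n < l.length by omega)]

lemma vpCnt_eq_countP (l : List ℕ) (d : ℕ) (k : ℕ) :
    vpCnt l d k = (List.range (l.length - d)).countP
        (fun j => vpD (l.getD j 0) (l.getD (d + j) 0) == k) := by
  unfold vpCnt
  rw [zip_eq_map_range, List.count_eq_countP, List.countP_map]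
  rfl

lemma countP_range_eq_card (m : ℕ) (q : ℕ → Bool) :
    (List.range m).countP q
      = ((Finset.range m).filter (fun j => q j = true)).card := by
  induction m with
  | zero => simp
  | succ n ih =>
      rw [List.range_succ, List.countP_append, Finset.range_add_one,
        Finset.filter_insert]
      by_cases hq : q n = true
      · rw [if_pos hq, Finset.card_insert_of_notMem (by simp)]
        simp [List.countP_cons, hq, ih]
      · rw [if_neg hq]
        simp [List.countP_cons, hq, ih]

lemma vpCnt_ge4 (l : List ℕ) (d k : ℕ) (hk : 4 ≤ k) : vpCnt l d k = 0 := by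
  unfold vpCnt
  rw [List.count_eq_zero]
  intro hmem
  rw [zip_eq_map_range] at hmem
  obtain ⟨j, _, hj⟩ := List.mem_map.mp hmem
  have := vpD_lt (l.getD j 0) (l.getD (d + j) 0)
  omega

lemma vpCnt_le_bnd (α : AddAut (ZMod 9)) (a : Fin 9 → ZMod 9) (a0 : ZMod 9)
    (hinj : Function.Injective a)
    (g : ZMod 9) (S : Finset (ZMod 9)) (k : ℕ)
    (Hset : addCycle α 3 g = ↑S) (hcard : S.card = vpBnd k)
    (hcls : ∀ z : ZMod 9, z ≠ 0 → (vpCls z.val = k ↔ z ∈ S))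
    (d : ℕ) (hd1 : 1 ≤ d) (hd8 : d ≤ 8)
    (H : Nat.card {j : Fin 9 //
        ∃ h : (j : ℕ) + d < 9, a ⟨(j : ℕ) + d, h⟩ - a j ∈ addCycle α 3 g}
      ≤ Nat.card (addCycle α 3 g)) :
    vpCnt (List.map ZMod.val (List.ofFn (fun j : Fin 9 => a j - a0))) d k
      ≤ vpBnd k := by
  set L := List.map ZMod.val (List.ofFn (fun j : Fin 9 => a j - a0)) with hLdef
  have hLlen : L.length = 9 := by simp [hLdef]
  have hgetD : ∀ (j : ℕ) (h : j < 9), L.getD j 0 = (a ⟨j, h⟩ - a0).val := by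
    intro j h
    rw [hLdef]
    rw [List.getD_eq_getElem _ _ (by simpa using h)]
    simp only [List.getElem_map, List.getElem_ofFn]
  have hpred : ∀ (j : ℕ) (h : j + d < 9),
      (vpD (L.getD j 0) (L.getD (d + j) 0) = k) ↔
        (a ⟨j + d, h⟩ - a ⟨j, by omega⟩ ∈ S) := by
    intro j h
    rw [hgetD j (by omega), hgetD (d + j) (by omega)]
    rw [show (⟨d + j, by omega⟩ : Fin 9) = ⟨j + d, h⟩ from Fin.ext (Nat.add_comm d j)]
    unfold vpD
    rw [val_sub_eq]
    rw [sub_sub_sub_cancel_right]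
    apply hcls
    intro heq
    rw [sub_eq_zero] at heq
    have := hinj heq
    have := congrArg Fin.val this
    simp at this
    omega
  rw [vpCnt_eq_countP, hLlen, countP_range_eq_card]
  have hcards : ((Finset.range (9 - d)).filter
      (fun j => (vpD (L.getD j 0) (L.getD (d + j) 0) == k) = true)).card
      = cnt a d S := by
    unfold cnt
    apply Finset.card_bij (fun j hj => (⟨j, by
      have := Finset.mem_range.mp (Finset.mem_filter.mp hj).1; omega⟩ : Fin 9))
    · intro j hj
      have hj1 := Finset.mem_filter.mp hj
      have hjr := Finset.mem_range.mp hj1.1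
      have hp : vpD (L.getD j 0) (L.getD (d + j) 0) = k := by
        simpa using hj1.2
      rw [Finset.mem_filter]
      refine ⟨Finset.mem_univ _, ?_⟩
      have hlt : j + d < 9 := by omega
      exact ⟨hlt, (hpred j hlt).mp hp⟩
    · intro j1 h1 j2 h2 he
      simpa using congrArg Fin.val he
    · intro b hb
      obtain ⟨-, hlt, hmem⟩ := Finset.mem_filter.mp hb
      refine ⟨(b : ℕ), Finset.mem_filter.mpr
        ⟨Finset.mem_range.mpr (by omega), ?_⟩, ?_⟩
      · simp only [beq_iff_eq]
        exact (hpred (b : ℕ) hlt).mpr hmem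
      · exact Fin.ext rfl
  rw [hcards, ← hcard]
  exact cnt_le_of α a g S Hset d H
set_option maxRecDepth 100000 in
set_option maxHeartbeats 20000000 in
lemma vpfact : vpDfs 8 [0] [1,2,3,4,5,6,7,8] (vpCl [0]) = false := by decide

theorem no_threefold_vatican_pseudoterrace_zmod9 :
    ∀ α : AddAut (ZMod 9), addOrderOf α = 3 →
      ∀ a : Fin 9 → ZMod 9, ¬ IsAddRomanPseudoterrace 9 8 α 3 a := by
  rintro α hα a ⟨hbij, hcond⟩
  have hc : α 1 = 4 ∨ α 1 = 7 := addAut_one_eq α hα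
  have H3 : addCycle α 3 3 = ↑({3} : Finset (ZMod 9)) :=
    cycle_eq_finset α hc 3 _ (by decide) (by decide)
  have H6 : addCycle α 3 6 = ↑({6} : Finset (ZMod 9)) :=
    cycle_eq_finset α hc 6 _ (by decide) (by decide)
  have H1 : addCycle α 3 1 = ↑({1, 4, 7} : Finset (ZMod 9)) :=
    cycle_eq_finset α hc 1 _ (by decide) (by decide)
  have H2 : addCycle α 3 2 = ↑({2, 5, 8} : Finset (ZMod 9)) :=
    cycle_eq_finset α hc 2 _ (by decide) (by decide)
  set a' : Fin 9 → ZMod 9 := fun j => a j - a 0 with ha'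
  have hbij' : Function.Bijective a' := by
    have h1 : a' = (Equiv.subRight (a 0)) ∘ a := rfl
    rw [h1]
    exact (Equiv.subRight (a 0)).bijective.comp hbij
  set L := List.map ZMod.val (List.ofFn a') with hLdef
  have hLlen : L.length = 9 := by simp [hLdef]
  set T := List.map ZMod.val (List.ofFn (fun i : Fin 8 => a' i.succ)) with hT
  have hTlen : T.length = 8 := by simp [hT]
  have hL0 : L = 0 :: T := by
    rw [hLdef, hT, List.ofFn_succ]
    simp [ha']
  have hnodupL : L.Nodup := by
    rw [hLdef]
    exact (List.nodup_ofFn.mpr hbij'.injective).map (ZMod.val_injective 9)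
  have hLperm : L.Perm [0,1,2,3,4,5,6,7,8] := by
    apply List.perm_of_nodup_nodup_toFinset_eq hnodupL (by decide)
    ext x
    simp only [List.mem_toFinset, hLdef, List.mem_map, List.mem_ofFn]
    constructor
    · rintro ⟨z, _, rfl⟩
      have hz := ZMod.val_lt z
      simp only [List.mem_cons, List.not_mem_nil, or_false]
      omega
    · intro hx
      have hx9 : x < 9 := by
        simp only [List.mem_cons, List.not_mem_nil, or_false] at hx
        omega
      obtain ⟨i, hi⟩ := hbij'.surjective ((x : ℕ) : ZMod 9)
      exact ⟨((x : ℕ) : ZMod 9), ⟨i, hi⟩, ZMod.val_cast_of_lt hx9⟩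
  have hTperm : ([1,2,3,4,5,6,7,8] : List ℕ).Perm T := by
    have h2 := hLperm
    rw [hL0] at h2
    exact (h2.cons_inv).symm
  have hBound : ∀ m d k, 1 ≤ d → vpCnt (([0] ++ T).take m) d k ≤ vpBnd k := by
    intro m d k hd
    have h0T : [0] ++ T = L := by rw [hL0]; rfl
    rw [h0T]
    calc vpCnt (L.take m) d k ≤ vpCnt L d k := vpCnt_take_le _ _ _ _
      _ ≤ vpBnd k := by
        rcases Nat.lt_or_ge d 9 with hd9 | hd9
        · rcases Nat.lt_or_ge k 4 with hk4 | hk4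
          · have hd8 : d ≤ 8 := by omega
            rw [hLdef, ha']
            interval_cases k
            · exact vpCnt_le_bnd α a (a 0) hbij.injective 3 {3} 0 H3 (by decide) (by decide)
                d hd hd8 (hcond 3 (by decide) d hd hd8)
            · exact vpCnt_le_bnd α a (a 0) hbij.injective 6 {6} 1 H6 (by decide) (by decide)
                d hd hd8 (hcond 6 (by decide) d hd hd8)
            · exact vpCnt_le_bnd α a (a 0) hbij.injective 1 {1,4,7} 2 H1 (by decide) (by decide)
                d hd hd8 (hcond 1 (by decide) d hd hd8)
            · exact vpCnt_le_bnd α a (a 0) hbij.injective 2 {2,5,8} 3 H2 (by decide) (by decide)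
                d hd hd8 (hcond 2 (by decide) d hd hd8)
          · rw [vpCnt_ge4 _ _ _ hk4]
            exact Nat.zero_le _
        · rw [vpCnt_eq_zero k (by rw [hLlen]; omega)]
          exact Nat.zero_le _
  have htrue := vpDfs_complete T [0] [1,2,3,4,5,6,7,8] hTperm
    (by simp [hTlen]) hBound
  rw [hTlen] at htrue
  have hfalse := vpfact
  simp only [List.reverse_cons, List.reverse_nil, List.nil_append] at htrue
  rw [hfalse] at htrue
  exact Bool.noConfusion htrue
end
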